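/- arXiv:0806.1398 — 18 statements merged into one kernel-verified Lean document; each statement's English description precedes it below -/
import Mathlib

section
/- For each integer n ≥ 1, the ring ℤ[1/n] satisfies the infinite primes property (IPP). -/
open Polynomial

/-- Schur: one prime divisor of a value, avoiding divisors of `M`. -/
lemma schur_int (h : ℤ[X]) (hdeg : 1 ≤ h.natDegree) (M : ℤ) (hM : M ≠ 0) :
    ∃ q k : ℤ, Prime q ∧ ¬ q ∣ M ∧ h.eval k ≠ 0 ∧ q ∣ h.eval k := by
  have hh0 : h ≠ 0 := fun h0 => by simp [h0] at hdeg
  by_cases hc : h.eval 0 = 0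
  · -- X divides h; evaluate at a large prime
    have hX : X ∣ h := by
      rw [Polynomial.X_dvd_iff, Polynomial.coeff_zero_eq_eval_zero]; exact hc
    obtain ⟨h₁, rfl⟩ := hX
    -- pick a prime q not dividing M and not a root
    have hroots : {x : ℤ | (X * h₁).IsRoot x}.Finite := Polynomial.finite_setOf_isRoot hh0
    have hdvdM : {x : ℤ | x ∣ M}.Finite := by
      apply (Set.finite_Icc (-|M|) |M|).subset
      intro x hx
      have h1 : |x| ≤ |M| := Int.le_of_dvd (abs_pos.2 hM) ((abs_dvd _ _).2 (hx.trans ((dvd_abs M M).mpr dvd_rfl)))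
      simp only [Set.mem_Icc]
      constructor
      · linarith [neg_abs_le x]
      · linarith [le_abs_self x]
    have hprimes : {q : ℤ | Prime q}.Infinite := by
      apply Set.Infinite.mono (s := (fun m : ℕ => (m : ℤ)) '' {p : ℕ | p.Prime})
      · rintro _ ⟨p, hp, rfl⟩
        exact (Int.prime_iff_natAbs_prime.mpr (by simpa using hp))
      · exact Nat.infinite_setOf_prime.image (Set.injOn_of_injective (fun a b h => Int.ofNat.inj h))
    obtain ⟨q, hq, hqn⟩ := ((hprimes.diff hroots).diff hdvdM).nonempty
    obtain ⟨hq', hqr⟩ := hq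
    refine ⟨q, q, hq', hqn, hqr, ?_⟩
    simp
  · set c := h.eval 0 with hcdef
    -- choose t with h(c*M*t) ∉ {-c, 0, c}
    set h₂ := h.comp (C (c * M) * X) with hh₂
    have hcM : c * M ≠ 0 := mul_ne_zero hc hM
    have hdeg₂ : 1 ≤ h₂.natDegree := by
      rw [hh₂, Polynomial.natDegree_comp, Polynomial.natDegree_C_mul hcM,
        Polynomial.natDegree_X, mul_one]
      exact hdeg
    have hfin : ∀ v : ℤ, {t : ℤ | h₂.eval t = v}.Finite := by
      intro v
      have hne : h₂ - C v ≠ 0 := by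
        intro h0
        rw [sub_eq_zero] at h0
        rw [h0, Polynomial.natDegree_C] at hdeg₂
        exact absurd hdeg₂ (by norm_num)
      have := Polynomial.finite_setOf_isRoot hne
      apply this.subset
      intro t ht
      simp [Polynomial.IsRoot, Set.mem_setOf_eq] at *
      simp [ht]
    obtain ⟨t, ht⟩ := (((hfin (-c)).union ((hfin 0).union (hfin c))).infinite_compl).nonempty
    simp only [Set.mem_compl_iff, Set.mem_union, Set.mem_setOf_eq, not_or] at ht
    obtain ⟨ht1, ht2, ht3⟩ := ht
    have heval : h₂.eval t = h.eval (c * M * t) := by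
      simp [hh₂, Polynomial.eval_comp, mul_comm]
    rw [heval] at ht1 ht2 ht3
    -- c*M*t ∣ h(c*M*t) - c
    have hdvd : c * M * t ∣ h.eval (c * M * t) - c := by
      simpa using Polynomial.sub_dvd_eval_sub (c * M * t) 0 h
    obtain ⟨s, hs⟩ := hdvd
    have hsval : h.eval (c * M * t) = c * (1 + M * (t * s)) := by ring_nf; linarith [hs]
    set w := 1 + M * (t * s) with hw
    have hw0 : w ≠ 0 := fun h0 => ht2 (by rw [hsval, h0, mul_zero])
    have hw1 : w ≠ 1 := fun h0 => ht3 (by rw [hsval, h0, mul_one])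
    have hwm1 : w ≠ -1 := fun h0 => ht1 (by rw [hsval, h0]; ring)
    have hwabs : w.natAbs ≠ 1 := by
      intro habs
      rcases Int.natAbs_eq_iff.mp habs with h1 | h1 <;> simp_all
    obtain ⟨q, hq, hqw⟩ := Int.exists_prime_and_dvd hwabs
    refine ⟨q, c * M * t, hq, ?_, ht2, ?_⟩
    · intro hqM
      have : q ∣ 1 := by
        have : q ∣ M * (t * s) := Dvd.dvd.mul_right hqM _
        have h1 : (1 : ℤ) = w - M * (t * s) := by rw [hw]; ring
        rw [h1]; exact dvd_sub hqw this
      exact hq.not_unit (isUnit_of_dvd_one this)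
    · rw [hsval]; exact Dvd.dvd.mul_left hqw c

lemma schur_infinite (h : ℤ[X]) (hdeg : 1 ≤ h.natDegree) (N : ℤ) (hN : N ≠ 0) :
    {q : ℤ | Prime q ∧ ¬ q ∣ N ∧ ∃ k : ℤ, h.eval k ≠ 0 ∧ q ∣ h.eval k}.Infinite := by
  intro hfin
  classical
  set F := hfin.toFinset with hF
  set M := N * ∏ q ∈ F, q with hM
  have hM0 : M ≠ 0 := by
    apply mul_ne_zero hN
    rw [Finset.prod_ne_zero_iff]
    intro q hq
    exact (hfin.mem_toFinset.mp hq).1.ne_zero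
  obtain ⟨q, k, hq, hqM, hk0, hqk⟩ := schur_int h hdeg M hM0
  have hqN : ¬ q ∣ N := fun hd => hqM (hd.mul_right _)
  have hqF : q ∈ F := hfin.mem_toFinset.mpr ⟨hq, hqN, k, hk0, hqk⟩
  exact hqM ((Finset.dvd_prod_of_mem id hqF).mul_left N)

lemma mem_rep (n : ℤ) (hn : n ≠ 0) {x : ℚ}
    (hx : x ∈ Algebra.adjoin ℤ ({(n : ℚ)⁻¹} : Set ℚ)) :
    ∃ (a : ℤ) (e : ℕ), x * (n : ℚ) ^ e = (a : ℚ) := by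
  have hnQ : (n : ℚ) ≠ 0 := Int.cast_ne_zero.mpr hn
  induction hx using Algebra.adjoin_induction with
  | mem y hy =>
    rw [Set.mem_singleton_iff] at hy
    subst hy
    exact ⟨1, 1, by field_simp; norm_num⟩
  | algebraMap r => exact ⟨r, 0, by simp⟩
  | add x y hx hy ihx ihy =>
    obtain ⟨a, e, ha⟩ := ihx
    obtain ⟨b, f, hb⟩ := ihy
    refine ⟨a * n ^ f + b * n ^ e, e + f, ?_⟩
    push_cast
    rw [← ha, ← hb]
    ring
  | mul x y hx hy ihx ihy =>
    obtain ⟨a, e, ha⟩ := ihx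
    obtain ⟨b, f, hb⟩ := ihy
    refine ⟨a * b, e + f, ?_⟩
    push_cast
    rw [← ha, ← hb]
    ring

lemma inv_mem_adjoin (n : ℤ) :
    (n : ℚ)⁻¹ ∈ Algebra.adjoin ℤ ({(n : ℚ)⁻¹} : Set ℚ) :=
  Algebra.subset_adjoin rfl

lemma coe_algebraMap_adjoin (n : ℤ) (a : ℤ) :
    ((algebraMap ℤ (Algebra.adjoin ℤ ({(n : ℚ)⁻¹} : Set ℚ)) a : _) : ℚ) = (a : ℚ) := by
  simp

lemma dvd_descend (n : ℤ) (hn : n ≠ 0) {q : ℤ} (hq : Prime q) (hqn : ¬ q ∣ n) {b : ℤ}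
    (hd : (algebraMap ℤ (Algebra.adjoin ℤ ({(n : ℚ)⁻¹} : Set ℚ)) q) ∣
      algebraMap ℤ (Algebra.adjoin ℤ ({(n : ℚ)⁻¹} : Set ℚ)) b) : q ∣ b := by
  obtain ⟨z, hz⟩ := hd
  obtain ⟨a, e, ha⟩ := mem_rep n hn z.2
  have hQ : (b : ℚ) = (q : ℚ) * (z : ℚ) := by
    have := congrArg (Subtype.val) hz
    simpa using this
  have hZ : b * n ^ e = q * a := by
    have : (b : ℚ) * (n : ℚ) ^ e = (q : ℚ) * ((z : ℚ) * (n : ℚ) ^ e) := by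
      rw [hQ]; ring
    rw [ha] at this
    exact_mod_cast this
  have : q ∣ b * n ^ e := ⟨a, hZ⟩
  rcases hq.dvd_mul.mp this with h1 | h1
  · exact h1
  · exact absurd (hq.dvd_of_dvd_pow h1) hqn

lemma prime_in_adjoin (n : ℤ) (hn : n ≠ 0) {q : ℤ} (hq : Prime q) (hqn : ¬ q ∣ n) :
    Prime (algebraMap ℤ (Algebra.adjoin ℤ ({(n : ℚ)⁻¹} : Set ℚ)) q) := by
  have hnQ : (n : ℚ) ≠ 0 := Int.cast_ne_zero.mpr hn
  refine ⟨?_, ?_, ?_⟩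
  · intro h0
    have : (q : ℚ) = 0 := by
      have := congrArg (Subtype.val) h0
      simpa using this
    exact hq.ne_zero (by exact_mod_cast this)
  · intro hu
    have h1 : (algebraMap ℤ (Algebra.adjoin ℤ ({(n : ℚ)⁻¹} : Set ℚ)) q) ∣
        algebraMap ℤ (Algebra.adjoin ℤ ({(n : ℚ)⁻¹} : Set ℚ)) 1 := by
      rw [map_one]; exact hu.dvd
    exact hq.not_unit (isUnit_of_dvd_one (dvd_descend n hn hq hqn h1))
  · intro x y hxy
    obtain ⟨z, hz⟩ := hxy
    obtain ⟨xa, i, hxa⟩ := mem_rep n hn x.2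
    obtain ⟨yb, j, hyb⟩ := mem_rep n hn y.2
    obtain ⟨zc, k, hzc⟩ := mem_rep n hn z.2
    have hQ : (x : ℚ) * (y : ℚ) = (q : ℚ) * (z : ℚ) := by
      have := congrArg (Subtype.val) hz
      simpa using this
    have hZ : xa * yb * n ^ k = q * zc * n ^ (i + j) := by
      have : ((x : ℚ) * n ^ i) * ((y : ℚ) * n ^ j) * (n : ℚ) ^ k
          = (q : ℚ) * ((z : ℚ) * n ^ k) * ((n : ℚ) ^ i * (n : ℚ) ^ j) := by
        linear_combination (n : ℚ) ^ i * (n : ℚ) ^ j * (n : ℚ) ^ k * hQ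
      rw [hxa, hyb, hzc] at this
      rw [show ((n : ℚ) ^ i * (n : ℚ) ^ j) = (n : ℚ) ^ (i + j) by rw [pow_add]] at this
      exact_mod_cast this
    have hdvd : q ∣ xa * yb := by
      have h1 : q ∣ xa * yb * n ^ k := ⟨zc * n ^ (i + j), by rw [hZ]; ring⟩
      rcases hq.dvd_mul.mp h1 with h2 | h2
      · exact h2
      · exact absurd (hq.dvd_of_dvd_pow h2) hqn
    -- helper: if q ∣ xa and x * n^i = xa then q divides x in the subring
    have key : ∀ (w : Algebra.adjoin ℤ ({(n : ℚ)⁻¹} : Set ℚ)) (wa : ℤ) (e : ℕ),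
        (w : ℚ) * (n : ℚ) ^ e = wa → q ∣ wa →
        (algebraMap ℤ (Algebra.adjoin ℤ ({(n : ℚ)⁻¹} : Set ℚ)) q) ∣ w := by
      intro w wa e hwa hqwa
      obtain ⟨a', ha'⟩ := hqwa
      refine ⟨(algebraMap ℤ _ a') * (⟨(n : ℚ)⁻¹, inv_mem_adjoin n⟩ : Algebra.adjoin ℤ ({(n : ℚ)⁻¹} : Set ℚ)) ^ e, ?_⟩
      apply Subtype.ext
      push_cast
      have hw : (w : ℚ) = (wa : ℚ) / (n : ℚ) ^ e := by
        field_simp [← hwa]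
        exact hwa
      rw [hw, ha']
      push_cast
      field_simp
      simp only [eq_intCast, one_div, inv_pow]
      field_simp
    rcases hq.dvd_mul.mp hdvd with h2 | h2
    · exact Or.inl (key x xa i hxa h2)
    · exact Or.inr (key y yb j hyb h2)

def IPP (D : Type*) [CommRing D] [IsDomain D] : Prop :=
  ∀ g : D[X], 1 ≤ g.natDegree →
    {p : D | Prime p ∧ ∃ k : D, g.eval k ≠ 0 ∧ p ∣ g.eval k}.Infinite

theorem zInvN_satisfies_IPP (n : ℤ) (hn : 1 ≤ n) :
    IPP (Algebra.adjoin ℤ ({(n : ℚ)⁻¹} : Set ℚ)) := by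
  intro g hg
  have hn0 : n ≠ 0 := by omega
  have hnQ : (n : ℚ) ≠ 0 := Int.cast_ne_zero.mpr hn0
  set A := Algebra.adjoin ℤ ({(n : ℚ)⁻¹} : Set ℚ) with hA
  set ι : A →+* ℚ := (Subalgebra.val A).toRingHom with hι
  have hιinj : Function.Injective ι := Subtype.val_injective
  have hιcoe : ∀ x : A, ι x = (x : ℚ) := fun x => rfl
  set G : ℚ[X] := g.map ι with hG
  have hGdeg : G.natDegree = g.natDegree := Polynomial.natDegree_map_eq_of_injective hιinj g
  set h : ℤ[X] := IsLocalization.integerNormalization (nonZeroDivisors ℤ) G with hh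
  obtain ⟨b, hb⟩ := IsLocalization.integerNormalization_map_to_map (nonZeroDivisors ℤ) G
  rw [← hh] at hb
  have hb0 : (b : ℤ) ≠ 0 := nonZeroDivisors.coe_ne_zero b
  have hbQ : ((b : ℤ) : ℚ) ≠ 0 := Int.cast_ne_zero.mpr hb0
  -- evaluation relation
  have heval : ∀ k : ℤ, ((h.eval k : ℤ) : ℚ) = ((b : ℤ) : ℚ) * G.eval ((k : ℤ) : ℚ) := by
    intro k
    have h1 : (h.map (algebraMap ℤ ℚ)).eval (algebraMap ℤ ℚ k) = algebraMap ℤ ℚ (h.eval k) := by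
      rw [Polynomial.eval_map, Polynomial.eval₂_at_apply]
    rw [hb] at h1
    have h2 : (((b : ℤ) • G).eval (algebraMap ℤ ℚ k)) = ((b : ℤ) : ℚ) * G.eval ((k : ℤ) : ℚ) := by
      simp [zsmul_eq_mul]
    rw [h2] at h1
    simpa using h1.symm
  -- degree of h
  have hhdeg : 1 ≤ h.natDegree := by
    have h1 : (h.map (algebraMap ℤ ℚ)).natDegree = h.natDegree :=
      Polynomial.natDegree_map_eq_of_injective (fun a b hab => by exact_mod_cast hab) h
    have h2 : ((b : ℤ) • G).natDegree = G.natDegree := by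
      have : ((b : ℤ) • G) = Polynomial.C (((b : ℤ) : ℚ)) * G := by
        ext i
        simp [zsmul_eq_mul, Polynomial.coeff_C_mul]
      rw [this, Polynomial.natDegree_C_mul hbQ]
    rw [← h1, hb, h2, hGdeg]
    exact hg
  -- apply Schur
  have hN0 : n * b ≠ 0 := mul_ne_zero hn0 hb0
  have hT := schur_infinite h hhdeg (n * b) hN0
  have hmapinj : Function.Injective (algebraMap ℤ A) := by
    intro a b hab
    have h1 : ((a : ℚ) : ℚ) = ((b : ℚ) : ℚ) := by
      have := congrArg (Subtype.val) hab
      simpa using this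
    exact_mod_cast h1
  refine Set.Infinite.mono ?_ (hT.image (Set.injOn_of_injective hmapinj))
  rintro _ ⟨q, ⟨hq, hqN, k, hk0, hqk⟩, rfl⟩
  have hqn : ¬ q ∣ n := fun hd => hqN (hd.mul_right _)
  have hqb : ¬ q ∣ (b : ℤ) := fun hd => hqN (hd.mul_left _)
  refine ⟨prime_in_adjoin n hn0 hq hqn, algebraMap ℤ A k, ?_, ?_⟩
  · -- g.eval κ ≠ 0
    intro h0
    apply hk0
    have hGk : G.eval ((k : ℤ) : ℚ) = ι (g.eval (algebraMap ℤ A k)) := by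
      rw [hG, Polynomial.eval_map]
      have : ((k : ℤ) : ℚ) = ι (algebraMap ℤ A k) := by simp [hιcoe]
      rw [this, Polynomial.eval₂_at_apply]
    have := heval k
    rw [hGk, h0, map_zero, mul_zero] at this
    exact_mod_cast this
  · -- divisibility
    obtain ⟨m, hm⟩ := hqk
    have hGk : G.eval ((k : ℤ) : ℚ) = ι (g.eval (algebraMap ℤ A k)) := by
      rw [hG, Polynomial.eval_map]
      have : ((k : ℤ) : ℚ) = ι (algebraMap ℤ A k) := by simp [hιcoe]
      rw [this, Polynomial.eval₂_at_apply]
    have hinA : (algebraMap ℤ A b) * g.eval (algebraMap ℤ A k)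
        = (algebraMap ℤ A q) * (algebraMap ℤ A m) := by
      apply hιinj
      have h1 : ι ((algebraMap ℤ A b) * g.eval (algebraMap ℤ A k))
          = ((b : ℤ) : ℚ) * ι (g.eval (algebraMap ℤ A k)) := by
        simp [hιcoe]
      have h2 : ι ((algebraMap ℤ A q) * (algebraMap ℤ A m)) = ((q : ℚ)) * ((m : ℚ)) := by
        simp [hιcoe]
      rw [h1, h2, ← hGk, ← heval k, hm]
      push_cast
      ring
    have hdvd : (algebraMap ℤ A q) ∣ (algebraMap ℤ A b) * g.eval (algebraMap ℤ A k) :=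
      ⟨algebraMap ℤ A m, hinA⟩
    rcases (prime_in_adjoin n hn0 hq hqn).dvd_mul.mp hdvd with h1 | h1
    · exact absurd (dvd_descend n hn0 hq hqn h1) hqb
    · exact h1
end

section
/- Let D be a unique factorization domain with fraction field K, let S be a subring of K containing (the image of) D, and suppose there is a nonzero element d ∈ D such that d·s ∈ D for every s ∈ S. Then D satisfies the infinite primes property (IPP) if and only if S satisfies the infinite primes property (IPP). -/
open Polynomial

theorem IPP.of_ringEquiv {A B : Type*} [CommRing A] [IsDomain A] [CommRing B] [IsDomain B]
    (e : A ≃+* B) (h : IPP A) : IPP B := by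
  intro g hg
  have hdeg : (g.map (e.symm : B →+* A)).natDegree = g.natDegree :=
    Polynomial.natDegree_map_eq_of_injective e.symm.injective g
  have h1 := h (g.map (e.symm : B →+* A)) (by rw [hdeg]; exact hg)
  have key : ∀ k : A, e ((g.map (e.symm : B →+* A)).eval k) = g.eval (e k) := by
    intro k
    rw [Polynomial.eval_map]
    have hc : (e : A →+* B).comp (e.symm : B →+* A) = RingHom.id B :=
      RingHom.ext fun b => e.apply_symm_apply b
    have h2 := Polynomial.hom_eval₂ g (e.symm : B →+* A) (e : A →+* B) k
    rw [hc] at h2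
    exact h2
  have h2 := h1.image e.injective.injOn
  refine Set.Infinite.mono ?_ h2
  rintro y ⟨p, ⟨hp, k, hk0, hkdvd⟩, rfl⟩
  refine ⟨(MulEquiv.prime_iff e.toMulEquiv).mpr hp, e k, ?_, ?_⟩
  · rw [← key k]
    exact fun h0 => hk0 (e.injective (by simpa using h0))
  · rw [← key k]
    exact map_dvd (e : A →+* B) hkdvd

theorem IPP_iff_of_subring_of_fractionField (D : Type*) [CommRing D] [IsDomain D]
    [UniqueFactorizationMonoid D] (S : Subring (FractionRing D))
    (hDS : ∀ a : D, algebraMap D (FractionRing D) a ∈ S)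
    (d : D) (hd : d ≠ 0)
    (hdS : ∀ s ∈ S, ∃ a : D, algebraMap D (FractionRing D) a =
      algebraMap D (FractionRing D) d * s) :
    IPP D ↔ IPP S := by
  set K := FractionRing D
  set f := algebraMap D K with hf
  have hinj : Function.Injective f := IsFractionRing.injective D K
  have hrange : f.range = S := by
    ext x
    constructor
    · rintro ⟨a, rfl⟩; exact hDS a
    · intro hx
      set a := IsFractionRing.num D x with ha
      set b := IsFractionRing.den D x with hb
      have hred : IsRelPrime a (b : D) := IsFractionRing.num_den_reduced D x
      have hbK : f (b : D) ≠ 0 :=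
        IsFractionRing.to_map_ne_zero_of_mem_nonZeroDivisors b.2
      have hxb : x * f (b : D) = f a := by
        conv_lhs => rw [← IsFractionRing.mk'_num_den' D x]
        rw [div_mul_cancel₀ _ hbK]
      have hbd : ∀ n : ℕ, (b : D) ^ n ∣ d := by
        intro n
        obtain ⟨c, hc⟩ := hdS (x ^ n) (pow_mem hx n)
        have hxn : x ^ n * f ((b : D) ^ n) = f (a ^ n) := by
          rw [map_pow, map_pow, ← mul_pow, hxb]
        have heq : c * (b : D) ^ n = d * a ^ n := by
          apply hinj
          rw [map_mul, map_mul, hc, mul_assoc, hxn]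
        have hdvd : (b : D) ^ n ∣ d * a ^ n := ⟨c, by rw [← heq]; ring⟩
        exact (hred.symm.pow).dvd_of_dvd_mul_right hdvd
      have hbu : IsUnit (b : D) := by
        by_contra hbu
        obtain ⟨n, hn⟩ := FiniteMultiplicity.of_not_isUnit hbu hd
        exact hn (hbd (n + 1))
      exact IsFractionRing.isInteger_of_isUnit_den hbu
  let e : D ≃+* S :=
    (RingEquiv.ofLeftInverse (Function.leftInverse_invFun hinj)).trans
      (RingEquiv.subringCongr hrange)
  exact ⟨fun h => h.of_ringEquiv e, fun h => h.of_ringEquiv e.symm⟩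
end

section
/- Let f, g ∈ ℤ[x] be polynomials such that there exists N ∈ ℤ with the property that for every integer k ≥ N, if g(k) ≠ 0 then g(k) ∣ f(k) in ℤ. Then f = 0 or deg f ≥ deg g. -/
open Polynomial Filter

theorem int_dpp_eventually (f g : ℤ[X])
    (h : ∃ N : ℤ, ∀ k : ℤ, N ≤ k → g.eval k ≠ 0 → g.eval k ∣ f.eval k) :
    f = 0 ∨ g.natDegree ≤ f.natDegree := by
  by_cases hf : f = 0
  · exact Or.inl hf
  right
  by_contra hlt
  push_neg at hlt
  obtain ⟨N, hN⟩ := h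
  set F := f.map (Int.castRingHom ℝ) with hFdef
  set G := g.map (Int.castRingHom ℝ) with hGdef
  have hinj : Function.Injective (Int.castRingHom ℝ) := Int.cast_injective
  have hdeg : F.degree < G.degree := by
    rw [degree_map_eq_of_injective hinj, degree_map_eq_of_injective hinj]
    exact degree_lt_degree hlt
  have hGpos : 0 < G.degree := by
    rw [degree_map_eq_of_injective hinj]
    exact natDegree_pos_iff_degree_pos.mp (lt_of_le_of_lt (Nat.zero_le _) hlt)
  have h1 : Tendsto (fun x => F.eval x / G.eval x) atTop (nhds 0) :=
    div_tendsto_zero_of_degree_lt F G hdeg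
  have h2 : Tendsto (fun x => |G.eval x|) atTop atTop := abs_tendsto_atTop G hGpos
  have hev1 : ∀ᶠ x in atTop, |F.eval x / G.eval x| < 1 := by
    have habs : Tendsto (fun x => |F.eval x / G.eval x|) atTop (nhds 0) := by
      simpa using h1.abs
    exact habs.eventually_lt_const one_pos
  have hev2 : ∀ᶠ x : ℝ in atTop, 1 ≤ |G.eval x| := h2.eventually_ge_atTop 1
  have hev : ∀ᶠ x : ℝ in atTop, |F.eval x| < |G.eval x| := by
    filter_upwards [hev1, hev2] with x h1x h2x
    have hGx : G.eval x ≠ 0 := fun h0 => by simp [h0] at h2x; linarith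
    have := (abs_div (F.eval x) (G.eval x)) ▸ h1x
    rw [div_lt_one (lt_of_lt_of_le one_pos h2x)] at this
    exact this
  have hevZ : ∀ᶠ k : ℤ in atTop, |F.eval (k : ℝ)| < |G.eval (k : ℝ)| ∧ 1 ≤ |G.eval (k : ℝ)| :=
    tendsto_intCast_atTop_atTop.eventually (hev.and hev2)
  have hroot : ∀ᶠ k : ℤ in atTop, f.IsRoot k := by
    filter_upwards [hevZ, eventually_ge_atTop N] with k hk hkN
    have hFe : F.eval (k : ℝ) = ((f.eval k : ℤ) : ℝ) := eval_intCast_map _ f k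
    have hGe : G.eval (k : ℝ) = ((g.eval k : ℤ) : ℝ) := eval_intCast_map _ g k
    rw [hFe, hGe] at hk
    have hgk : g.eval k ≠ 0 := by
      intro h0
      rw [h0] at hk
      simp at hk
      linarith [hk.2]
    have hdvd := hN k hkN hgk
    have hlt' : (f.eval k).natAbs < (g.eval k).natAbs := by
      have h3 : |f.eval k| < |g.eval k| := by exact_mod_cast hk.1
      rw [Int.abs_eq_natAbs, Int.abs_eq_natAbs] at h3
      exact_mod_cast h3
    exact Int.eq_zero_of_dvd_of_natAbs_lt_natAbs hdvd hlt'
  obtain ⟨a, ha⟩ := eventually_atTop.mp hroot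
  exact hf (f.eq_zero_of_infinite_isRoot ((Set.Ici_infinite a).mono fun x hx => ha x hx))
end

section
/- Let D be an integral domain and let f, g ∈ (D[x])[y] be polynomials in a variable y with coefficients in D[x]. Suppose that for every natural number N there exists t ≥ N such that the polynomial g(x^t) obtained by substituting y := x^t divides f(x^t) in D[x]. Then f = 0 or deg_y f ≥ deg_y g. -/
open Polynomial

lemma eval_X_pow_key {R : Type*} [CommRing R] [IsDomain R] (f : R[X][X]) (hf : f ≠ 0)
    (t : ℕ) (ht : ∀ i, (f.coeff i).natDegree < t) :
    f.eval ((X : R[X]) ^ t) ≠ 0 ∧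
      t * f.natDegree ≤ (f.eval ((X : R[X]) ^ t)).natDegree ∧
      (f.eval ((X : R[X]) ^ t)).natDegree < t * f.natDegree + t := by
  set n := f.natDegree with hn
  have hev : f.eval ((X : R[X]) ^ t) =
      ∑ i ∈ Finset.range (n + 1), f.coeff i * X ^ (t * i) := by
    rw [eval_eq_sum_range]
    congr 1; ext i; rw [← pow_mul]
  have hcoeff : (f.eval ((X : R[X]) ^ t)).coeff (t * n + (f.coeff n).natDegree)
      = (f.coeff n).leadingCoeff := by
    rw [hev, finset_sum_coeff]
    rw [Finset.sum_eq_single n]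
    · rw [coeff_mul_X_pow', if_pos (Nat.le_add_right _ _), Nat.add_sub_cancel_left]
      rfl
    · intro i hi hne
      rw [coeff_mul_X_pow']
      split_ifs with hle
      · apply coeff_eq_zero_of_natDegree_lt
        have hi' : i < n := lt_of_le_of_ne (Nat.lt_succ_iff.mp (Finset.mem_range.mp hi)) hne
        have h2 : t * i + t ≤ t * n := by
          calc t * i + t = t * (i + 1) := by ring
          _ ≤ t * n := Nat.mul_le_mul_left t hi'
        have h3 := ht i
        omega
      · rfl
    · intro hni
      exact absurd (Finset.self_mem_range_succ n) hni
  have hlead : f.coeff n ≠ 0 := by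
    rw [hn]; exact mt leadingCoeff_eq_zero.mp hf
  have hc : (f.eval ((X : R[X]) ^ t)).coeff (t * n + (f.coeff n).natDegree) ≠ 0 := by
    rw [hcoeff]; exact leadingCoeff_ne_zero.mpr hlead
  have hne : f.eval ((X : R[X]) ^ t) ≠ 0 := fun h0 => hc (by rw [h0]; simp)
  have hlb : t * n + (f.coeff n).natDegree ≤ (f.eval ((X : R[X]) ^ t)).natDegree :=
    le_natDegree_of_ne_zero hc
  refine ⟨hne, le_trans (Nat.le_add_right _ _) hlb, ?_⟩
  rw [hev]
  have ht0 : 0 < t := Nat.lt_of_le_of_lt (Nat.zero_le _) (ht 0)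
  have := natDegree_sum_le_of_forall_le (Finset.range (n + 1))
    (fun i => f.coeff i * X ^ (t * i)) (n := t * n + t - 1) ?_
  · omega
  · intro i hi
    refine le_trans (natDegree_mul_le) ?_
    rw [natDegree_X_pow]
    have h1 := ht i
    have h2 : i ≤ n := Nat.lt_succ_iff.mp (Finset.mem_range.mp hi)
    have : t * i ≤ t * n := Nat.mul_le_mul_left t h2
    omega

theorem polynomial_two_var_degree (D : Type*) [CommRing D] [IsDomain D]
    (f g : Polynomial (Polynomial D))
    (h : ∀ N : ℕ, ∃ t : ℕ, N ≤ t ∧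
      g.eval ((X : D[X]) ^ t) ∣ f.eval ((X : D[X]) ^ t)) :
    f = 0 ∨ g.natDegree ≤ f.natDegree := by
  by_cases hf : f = 0
  · exact Or.inl hf
  right
  by_contra hlt
  push_neg at hlt
  have hg : g ≠ 0 := by
    intro h0; rw [h0] at hlt; simp at hlt
  set Bf := (Finset.range (f.natDegree + 1)).sup (fun i => (f.coeff i).natDegree) with hBf
  set Bg := (Finset.range (g.natDegree + 1)).sup (fun i => (g.coeff i).natDegree) with hBg
  obtain ⟨t, ht, hdvd⟩ := h (Bf + Bg + 1)
  have htf : ∀ i, (f.coeff i).natDegree < t := by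
    intro i
    by_cases hi : i ≤ f.natDegree
    · have : (f.coeff i).natDegree ≤ Bf :=
        Finset.le_sup (f := fun i => (f.coeff i).natDegree) (Finset.mem_range.mpr (Nat.lt_succ_of_le hi))
      omega
    · rw [coeff_eq_zero_of_natDegree_lt (by omega)]
      simpa using by omega
  have htg : ∀ i, (g.coeff i).natDegree < t := by
    intro i
    by_cases hi : i ≤ g.natDegree
    · have : (g.coeff i).natDegree ≤ Bg :=
        Finset.le_sup (f := fun i => (g.coeff i).natDegree) (Finset.mem_range.mpr (Nat.lt_succ_of_le hi))
      omega
    · rw [coeff_eq_zero_of_natDegree_lt (by omega)]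
      simpa using by omega
  obtain ⟨hfne, hflb, hfub⟩ := eval_X_pow_key f hf t htf
  obtain ⟨hgne, hglb, hgub⟩ := eval_X_pow_key g hg t htg
  have hdeg := natDegree_le_of_dvd hdvd hfne
  have h1 : t * g.natDegree < t * f.natDegree + t := lt_of_le_of_lt (le_trans hglb hdeg) hfub
  have h2 : t * (f.natDegree + 1) ≤ t * g.natDegree := Nat.mul_le_mul_left t hlt
  have h3 : t * (f.natDegree + 1) = t * f.natDegree + t := by ring
  omega
end

section
/- Let D be an integral domain. Then the polynomial ring D[x] satisfies the degree polynomial property (DPP). -/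
open Polynomial

def DPP (D : Type*) [CommRing D] [IsDomain D] : Prop :=
  ∀ f g : D[X], (∀ k : D, g.eval k ≠ 0 → g.eval k ∣ f.eval k) →
    f = 0 ∨ g.natDegree ≤ f.natDegree

lemma coeff_eval_X_pow {D : Type*} [CommRing D]
    (p : Polynomial (Polynomial D)) (N j : ℕ) :
    (p.eval ((X : Polynomial D) ^ N)).coeff j =
      ∑ i ∈ Finset.range (p.natDegree + 1),
        if N * i ≤ j then (p.coeff i).coeff (j - N * i) else 0 := by
  rw [Polynomial.eval_eq_sum_range, Polynomial.finset_sum_coeff]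
  refine Finset.sum_congr rfl fun i _ => ?_
  rw [← pow_mul, Polynomial.coeff_mul_X_pow']

lemma eval_X_pow_facts {D : Type*} [CommRing D] [IsDomain D]
    (p : Polynomial (Polynomial D)) (hp : p ≠ 0) (N : ℕ)
    (hN : ∀ i, (p.coeff i).natDegree < N) :
    p.eval ((X : Polynomial D) ^ N) ≠ 0 ∧
    N * p.natDegree ≤ (p.eval ((X : Polynomial D) ^ N)).natDegree ∧
    (p.eval ((X : Polynomial D) ^ N)).natDegree < N * (p.natDegree + 1) := by
  set n := p.natDegree with hn
  set c := p.coeff n with hc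
  have hcne : c ≠ 0 := by
    simpa [hc, hn, Polynomial.coeff_natDegree] using Polynomial.leadingCoeff_ne_zero.mpr hp
  set d := c.natDegree with hd
  have key : (p.eval ((X : Polynomial D) ^ N)).coeff (N * n + d) = c.coeff d := by
    rw [coeff_eval_X_pow]
    rw [Finset.sum_eq_single n]
    · simp; rfl
    · intro i hi hine
      have hilt : i < n := lt_of_le_of_ne (Finset.mem_range_succ_iff.mp hi) hine
      have h1 : N * i + N ≤ N * n := by
        calc N * i + N = N * (i + 1) := by ring
        _ ≤ N * n := Nat.mul_le_mul_left N hilt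
      rw [if_pos (by omega)]
      apply Polynomial.coeff_eq_zero_of_natDegree_lt
      have := hN i
      omega
    · intro hns
      exact absurd (Finset.self_mem_range_succ n) hns
  have hcd : c.coeff d ≠ 0 := by
    simpa [hd, Polynomial.coeff_natDegree] using Polynomial.leadingCoeff_ne_zero.mpr hcne
  have hne : p.eval ((X : Polynomial D) ^ N) ≠ 0 := by
    intro h0
    rw [h0] at key
    simp at key
    exact hcd key.symm
  have hle : N * n ≤ (p.eval ((X : Polynomial D) ^ N)).natDegree := by
    have := Polynomial.le_natDegree_of_ne_zero (key ▸ hcd)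
    omega
  have hzero : ∀ j, N * (n + 1) ≤ j → (p.eval ((X : Polynomial D) ^ N)).coeff j = 0 := by
    intro j hj
    rw [coeff_eval_X_pow]
    apply Finset.sum_eq_zero
    intro i hi
    have hile : i ≤ n := Finset.mem_range_succ_iff.mp hi
    have h1 : N * i ≤ N * n := Nat.mul_le_mul_left N hile
    have h2 : N * (n + 1) = N * n + N := by ring
    split_ifs with h
    · apply Polynomial.coeff_eq_zero_of_natDegree_lt
      have := hN i
      omega
    · rfl
  refine ⟨hne, hle, ?_⟩
  by_contra hcon
  push_neg at hcon
  exact Polynomial.leadingCoeff_ne_zero.mpr hne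
    (hzero _ hcon)

theorem polynomialRing_satisfies_DPP (D : Type*) [CommRing D] [IsDomain D] :
    DPP (Polynomial D) := by
  intro f g h
  by_contra hc
  push_neg at hc
  obtain ⟨hf, hlt⟩ := hc
  have hg : g ≠ 0 := by
    intro h0
    simp [h0] at hlt
  set m := f.natDegree with hm
  set n := g.natDegree with hn
  set N : ℕ := ((Finset.range (m + 1)).sup fun i => (f.coeff i).natDegree) ⊔
      ((Finset.range (n + 1)).sup fun i => (g.coeff i).natDegree) + 1 with hN
  have hNf : ∀ i, (f.coeff i).natDegree < N := by
    intro i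
    rcases le_or_gt i m with hi | hi
    · have : (f.coeff i).natDegree ≤ (Finset.range (m + 1)).sup fun i => (f.coeff i).natDegree :=
        Finset.le_sup (f := fun i => (f.coeff i).natDegree) (Finset.mem_range_succ_iff.mpr hi)
      omega
    · rw [Polynomial.coeff_eq_zero_of_natDegree_lt hi]
      simp [hN]
  have hNg : ∀ i, (g.coeff i).natDegree < N := by
    intro i
    rcases le_or_gt i n with hi | hi
    · have : (g.coeff i).natDegree ≤ (Finset.range (n + 1)).sup fun i => (g.coeff i).natDegree :=
        Finset.le_sup (f := fun i => (g.coeff i).natDegree) (Finset.mem_range_succ_iff.mpr hi)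
      omega
    · rw [Polynomial.coeff_eq_zero_of_natDegree_lt hi]
      simp [hN]
  obtain ⟨hfne, hfle, hflt⟩ := eval_X_pow_facts f hf N hNf
  obtain ⟨hgne, hgle, hglt⟩ := eval_X_pow_facts g hg N hNg
  have hdvd := h _ hgne
  have hle := Polynomial.natDegree_le_natDegree (Polynomial.degree_le_of_dvd hdvd hfne)
  have h1 : N * (f.natDegree + 1) ≤ N * g.natDegree := Nat.mul_le_mul_left N hlt
  omega
end

section
/- Let D be a unique factorization domain. Then D satisfies the degree polynomial property (DPP) if and only if D satisfies the evaluation polynomial property (EPP). -/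
open Polynomial
open scoped nonZeroDivisors

def EPP (D : Type*) [CommRing D] [IsDomain D] : Prop :=
  ∀ f g : D[X], g.IsPrimitive → 1 ≤ g.natDegree →
    (∀ k : D, g.eval k ≠ 0 → g.eval k ∣ f.eval k) → g ∣ f

lemma dpp_to_epp (D K : Type*) [CommRing D] [IsDomain D] [StrongNormalizedGCDMonoid D]
    [Field K] [Algebra D K] [IsFractionRing D K] (hD : DPP D) : EPP D := by
  intro f g hgprim hgdeg hdvd
  have hinj : Function.Injective (algebraMap D K) := IsFractionRing.injective D K
  have hg0 : g ≠ 0 := fun h => by simp [h] at hgdeg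
  set fK := f.map (algebraMap D K) with hfK
  set gK := g.map (algebraMap D K) with hgK
  have hgK0 : gK ≠ 0 := (Polynomial.map_ne_zero_iff hinj).2 hg0
  obtain ⟨cq, hcq⟩ := IsLocalization.integerNormalization_map_to_map D⁰ (fK / gK)
  obtain ⟨cr, hcr⟩ := IsLocalization.integerNormalization_map_to_map D⁰ (fK % gK)
  set Q : D[X] := C (cr : D) * IsLocalization.integerNormalization D⁰ (fK / gK) with hQ
  set R : D[X] := C (cq : D) * IsLocalization.integerNormalization D⁰ (fK % gK) with hR
  have hcq0 : (cq : D) ≠ 0 := nonZeroDivisors.coe_ne_zero cq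
  have hcr0 : (cr : D) ≠ 0 := nonZeroDivisors.coe_ne_zero cr
  -- key identity over D
  have hkey : C ((cq : D) * (cr : D)) * f = g * Q + R := by
    apply Polynomial.map_injective (algebraMap D K) hinj
    simp only [Polynomial.map_mul, Polynomial.map_add, Polynomial.map_C, hQ, hR,
      hcq, hcr, map_mul, ← hfK, ← hgK]
    rw [← algebraMap_smul K (cq : D) (fK / gK), ← algebraMap_smul K (cr : D) (fK % gK),
      smul_eq_C_mul, smul_eq_C_mul]
    conv_lhs => rw [← EuclideanDomain.div_add_mod fK gK]
    ring
  -- R has degree < deg g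
  have hRdeg : R.degree < g.degree := by
    have hmap : (R.map (algebraMap D K)).degree = R.degree :=
      degree_map_eq_of_injective hinj R
    have hC : ∀ c : D, c ≠ 0 → (C (algebraMap D K c)).degree = 0 := fun c hc =>
      degree_C (fun h => hc (hinj (by simpa using h)))
    have h1 : (R.map (algebraMap D K)).degree = (fK % gK).degree := by
      rw [hR, Polynomial.map_mul, Polynomial.map_C, hcr,
        ← algebraMap_smul K (cr : D) (fK % gK), smul_eq_C_mul, degree_mul, degree_mul,
        hC _ hcq0, hC _ hcr0]
      simp
    have h2 : (fK % gK).degree < gK.degree := EuclideanDomain.mod_lt _ hgK0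
    have h3 : gK.degree = g.degree := degree_map_eq_of_injective hinj g
    rw [← hmap, h1]
    exact h3 ▸ h2
  have hRdvd : ∀ k : D, g.eval k ≠ 0 → g.eval k ∣ R.eval k := by
    intro k hk
    have h1 : g.eval k ∣ (C ((cq : D) * (cr : D)) * f).eval k := by
      rw [eval_mul]
      exact Dvd.dvd.mul_left (hdvd k hk) _
    rw [hkey, eval_add, eval_mul] at h1
    exact (dvd_add_right (Dvd.intro _ rfl)).mp h1
  have hR0 : R = 0 := by
    by_cases h0 : R = 0
    · exact h0
    rcases hD R g hRdvd with h | h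
    · exact h
    · have := Polynomial.natDegree_lt_natDegree h0 hRdeg
      omega
  have hdvdCf : g ∣ C ((cq : D) * (cr : D)) * f := ⟨Q, by rw [hkey, hR0, add_zero]⟩
  by_cases hf : f = 0
  · simp [hf]
  · have hCf0 : C ((cq : D) * (cr : D)) * f ≠ 0 :=
      mul_ne_zero (by simp [hcq0, hcr0]) hf
    have h1 : g ∣ (C ((cq : D) * (cr : D)) * f).primPart :=
      (hgprim.dvd_primPart_iff_dvd hCf0).2 hdvdCf
    rw [primPart_mul hCf0] at h1
    have h2 : (C ((cq : D) * (cr : D))).primPart * f.primPart ∣ f := by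
      have h3 : (C ((cq : D) * (cr : D))).primPart * f.primPart ∣ 1 * f :=
        mul_dvd_mul (isUnit_primPart_C ((cq : D) * (cr : D))).dvd f.primPart_dvd
      rwa [one_mul] at h3
    exact h1.trans h2

theorem DPP_iff_EPP (D : Type*) [CommRing D] [IsDomain D]
    [UniqueFactorizationMonoid D] : DPP D ↔ EPP D := by
  classical
  letI : StrongNormalizationMonoid D := UniqueFactorizationMonoid.normalizationMonoid
  letI : StrongNormalizedGCDMonoid D := UniqueFactorizationMonoid.toStrongNormalizedGCDMonoid D
  constructor
  · exact fun hD => dpp_to_epp D (FractionRing D) hD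
  · intro hE f g hdvd
    by_cases hgd : g.natDegree = 0
    · by_cases hf : f = 0
      · exact Or.inl hf
      · exact Or.inr (hgd ▸ Nat.zero_le _)
    · have hg0 : g ≠ 0 := fun h => hgd (by simp [h])
      have hc0 : g.content ≠ 0 := fun h => hg0 (content_eq_zero_iff.mp h)
      have hdvd' : ∀ k : D, g.primPart.eval k ≠ 0 → g.primPart.eval k ∣ f.eval k := by
        intro k hk
        have hgk : g.eval k ≠ 0 := by
          conv_lhs => rw [g.eq_C_content_mul_primPart]
          rw [eval_mul, eval_C]
          exact mul_ne_zero hc0 hk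
        exact dvd_trans (eval_dvd g.primPart_dvd) (hdvd k hgk)
      have h1 : g.primPart ∣ f :=
        hE f g.primPart g.isPrimitive_primPart (by rw [natDegree_primPart]; omega) hdvd'
      by_cases hf : f = 0
      · exact Or.inl hf
      · exact Or.inr (g.natDegree_primPart ▸ Polynomial.natDegree_le_of_dvd h1 hf)
end

section
/- Let f, g ∈ ℤ[x] with g primitive and deg g ≥ 1, and suppose there exists N ∈ ℤ such that for every integer k ≥ N, if g(k) ≠ 0 then g(k) ∣ f(k) in ℤ. Then g divides f in ℤ[x]. -/
open Polynomial Filter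

theorem int_epp_eventually (f g : ℤ[X]) (hprim : g.IsPrimitive)
    (hdeg : 1 ≤ g.natDegree)
    (h : ∃ N : ℤ, ∀ k : ℤ, N ≤ k → g.eval k ≠ 0 → g.eval k ∣ f.eval k) :
    g ∣ f := by
  obtain ⟨N, hN⟩ := h
  have hg0 : g ≠ 0 := by
    intro h0; rw [h0] at hdeg; simp at hdeg
  set φ := Int.castRingHom ℚ
  have hφinj : Function.Injective φ := Int.cast_injective
  set fq := f.map φ with hfq
  set gq := g.map φ with hgq
  have hgq0 : gq ≠ 0 := by
    simpa [hgq, Polynomial.map_eq_zero_iff hφinj] using hg0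
  set q := fq / gq
  set r := fq % gq with hr
  have hdm : gq * q + r = fq := EuclideanDomain.div_add_mod fq gq
  have hrlt : r.degree < gq.degree := EuclideanDomain.mod_lt fq hgq0
  obtain ⟨d1, hd1⟩ := IsLocalization.integerNormalization_map_to_map (nonZeroDivisors ℤ) q
  obtain ⟨d2, hd2⟩ := IsLocalization.integerNormalization_map_to_map (nonZeroDivisors ℤ) r
  set Q := IsLocalization.integerNormalization (nonZeroDivisors ℤ) q
  set R := IsLocalization.integerNormalization (nonZeroDivisors ℤ) r
  have hd1ne : (d1 : ℤ) ≠ 0 := nonZeroDivisors.coe_ne_zero d1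
  have hd2ne : (d2 : ℤ) ≠ 0 := nonZeroDivisors.coe_ne_zero d2
  have halg : algebraMap ℤ ℚ = φ := by ext n; simp [φ]
  rw [halg] at hd1 hd2
  have hsm : ∀ (d : ℤ) (p : ℚ[X]), d • p = C ((d : ℚ)) * p := by
    intro d p; ext n; simp [Polynomial.coeff_smul, zsmul_eq_mul]
  set S : ℤ[X] := C (d1 : ℤ) * R with hS
  have hmapS : S.map φ = C (((d1 : ℤ) * (d2 : ℤ) : ℤ) : ℚ) * r := by
    rw [hS, Polynomial.map_mul, Polynomial.map_C, hd2, hsm]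
    simp only [φ, eq_intCast]
    push_cast
    rw [← mul_assoc, ← Polynomial.C_mul]
  have key : C ((d1 : ℤ) * (d2 : ℤ)) * f = g * (C (d2 : ℤ) * Q) + S := by
    apply Polynomial.map_injective φ hφinj
    simp only [Polynomial.map_add, Polynomial.map_mul, Polynomial.map_C]
    rw [hd1, hsm, hmapS, ← hgq, ← hfq, ← hdm]
    simp only [φ, eq_intCast, Int.cast_mul, Polynomial.C_mul]
    ring
  -- S evaluates to a multiple statement; show S = 0 via growth
  have hr0 : r = 0 := by
    by_contra hrne
    have hSne : S ≠ 0 := by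
      intro h0
      rw [h0, Polynomial.map_zero] at hmapS
      have : C (((d1 : ℤ) * (d2 : ℤ) : ℤ) : ℚ) ≠ 0 := by
        simp [Polynomial.C_eq_zero, hd1ne, hd2ne]
      exact hrne ((mul_eq_zero.mp hmapS.symm).resolve_left this)
    -- degrees
    have hSdeg : S.degree < g.degree := by
      have h1 : (S.map φ).degree = S.degree :=
        Polynomial.degree_map_eq_of_injective hφinj S
      have h2 : (S.map φ).degree = r.degree := by
        rw [hmapS]
        rw [Polynomial.degree_C_mul (by simp [hd1ne, hd2ne] : (((d1:ℤ)*(d2:ℤ) : ℤ) : ℚ) ≠ 0)]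
      have h3 : gq.degree = g.degree := Polynomial.degree_map_eq_of_injective hφinj g
      rw [← h1, h2, ← h3]; exact hrlt
    -- real versions
    set ψ := Int.castRingHom ℝ
    have hψinj : Function.Injective ψ := Int.cast_injective
    set gR := g.map ψ with hgR
    set SR := S.map ψ with hSR
    have hgRdeg : 0 < gR.degree := by
      rw [hgR, Polynomial.degree_map_eq_of_injective hψinj]
      exact Polynomial.natDegree_pos_iff_degree_pos.mp (by omega)
    have hSRdeg : SR.degree < gR.degree := by
      rw [hgR, hSR, Polynomial.degree_map_eq_of_injective hψinj,
        Polynomial.degree_map_eq_of_injective hψinj]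
      exact hSdeg
    have hgR0 : gR ≠ 0 := fun h0 => by simp [h0] at hgRdeg
    have htend : Tendsto (fun x : ℝ => |SR.eval x / gR.eval x|) atTop (nhds 0) := by
      simpa using (Polynomial.div_tendsto_zero_of_degree_lt SR gR hSRdeg).abs
    have hev1 : ∀ᶠ x : ℝ in atTop, |SR.eval x / gR.eval x| < 1 :=
      htend.eventually (gt_mem_nhds one_pos)
    have hev2 : ∀ᶠ x : ℝ in atTop, ¬ gR.IsRoot x := Polynomial.eventually_no_roots gR hgR0
    obtain ⟨M, hM⟩ := (hev1.and hev2).exists_forall_of_atTop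
    -- all large integers are roots of S
    have hroots : ∀ n : ℕ, S.IsRoot (max N ⌈M⌉ + n) := by
      intro n
      set k : ℤ := max N ⌈M⌉ + n with hk
      have hkN : N ≤ k := by
        have := le_max_left N ⌈M⌉; omega
      have hkM : M ≤ (k : ℝ) := by
        have h1 : (⌈M⌉ : ℝ) ≤ (k : ℝ) := by
          have : ⌈M⌉ ≤ k := by have := le_max_right N ⌈M⌉; omega
          exact_mod_cast this
        linarith [Int.le_ceil M]
      obtain ⟨habs, hnr⟩ := hM (k : ℝ) hkM
      have hgRk : gR.eval (k : ℝ) = ((g.eval k : ℤ) : ℝ) := by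
        rw [hgR]; exact_mod_cast Polynomial.eval_intCast_map ψ g k
      have hSRk : SR.eval (k : ℝ) = ((S.eval k : ℤ) : ℝ) := by
        rw [hSR]; exact_mod_cast Polynomial.eval_intCast_map ψ S k
      have hgk : g.eval k ≠ 0 := by
        intro h0
        apply hnr
        simp [Polynomial.IsRoot, hgRk, h0]
      -- divisibility
      have hdvd : g.eval k ∣ S.eval k := by
        have h1 : g.eval k ∣ f.eval k := hN k hkN hgk
        have h2 := congrArg (Polynomial.eval k) key
        simp only [Polynomial.eval_mul, Polynomial.eval_add, Polynomial.eval_C] at h2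
        have : S.eval k = (d1:ℤ) * (d2:ℤ) * f.eval k - g.eval k * ((d2:ℤ) * Q.eval k) := by
          linarith [h2]
        rw [this]
        exact dvd_sub (Dvd.dvd.mul_left h1 _) (Dvd.dvd.mul_right dvd_rfl _)
      by_contra hSk
      have hSk' : S.eval k ≠ 0 := hSk
      have hle : |g.eval k| ≤ |S.eval k| :=
        Int.le_of_dvd (abs_pos.mpr hSk') ((abs_dvd _ _).mpr ((dvd_abs _ _).mpr hdvd))
      have hlt : |S.eval k| < |g.eval k| := by
        have hgne : gR.eval (k:ℝ) ≠ 0 := fun h0 => hnr h0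
        rw [abs_div, div_lt_one (abs_pos.mpr hgne)] at habs
        rw [hgRk, hSRk] at habs
        exact_mod_cast habs
      omega
    have hSzero : S = 0 := by
      apply Polynomial.eq_zero_of_infinite_isRoot
      refine Set.infinite_of_injective_forall_mem
        (f := fun n : ℕ => (max N ⌈M⌉ + n : ℤ)) ?_ fun n => hroots n
      intro a b hab
      simpa using hab
    exact hSne hSzero
  -- conclude g ∣ f
  have hdvdq : gq ∣ fq := Dvd.intro q (by rw [← hdm, hr0, add_zero])
  by_cases hf0 : f = 0
  · simp [hf0]
  have hcont : f.content ≠ 0 := fun h0 => hf0 (Polynomial.content_eq_zero_iff.mp h0)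
  have hfdecomp : fq = C ((f.content : ℤ) : ℚ) * (f.primPart.map φ) := by
    conv_lhs => rw [hfq, f.eq_C_content_mul_primPart]
    rw [Polynomial.map_mul, Polynomial.map_C]
    simp only [φ, eq_intCast]
  have hdvdprim : gq ∣ f.primPart.map φ := by
    have hu : IsUnit (C ((f.content : ℤ) : ℚ)) :=
      Polynomial.isUnit_C.mpr (IsUnit.mk0 _ (by exact_mod_cast hcont))
    rw [hfdecomp] at hdvdq
    exact (IsUnit.dvd_mul_left hu.unit.isUnit).mp (by simpa [mul_comm] using hdvdq)
  have : g ∣ f.primPart :=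
    (Polynomial.IsPrimitive.Int.dvd_iff_map_cast_dvd_map_cast g f.primPart hprim
      ).mpr hdvdprim
  exact this.trans f.primPart_dvd
end

section
/- Let D be a unique factorization domain. If D satisfies the strong evaluation polynomial property (SEPP), then D satisfies the evaluation polynomial property (EPP). -/
open Polynomial

def SEPP (D : Type*) [CommRing D] [IsDomain D] : Prop :=
  ∀ f g : D[X], Irreducible g → 1 ≤ g.natDegree →
    ∃ I : Set D, I.Infinite ∧ ∀ H : Set D, H ⊆ I → H.Infinite →
      (∀ k ∈ H, g.eval k ≠ 0 → g.eval k ∣ f.eval k) → g ∣ f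

theorem aux_SEPP_EPP (D : Type*) [CommRing D] [IsDomain D]
    [UniqueFactorizationMonoid D] (h : SEPP D) :
    ∀ n : ℕ, ∀ g : D[X], g.natDegree ≤ n → g.IsPrimitive →
    ∀ f : D[X], ∀ S : Set D, S.Finite →
    (∀ k ∉ S, g.eval k ≠ 0 → g.eval k ∣ f.eval k) → g ∣ f := by
  intro n
  induction n with
  | zero =>
    intro g hdeg hprim f S hS hdvd
    have hg0 : g.natDegree = 0 := Nat.le_zero.mp hdeg
    have hgc : g = C (g.coeff 0) := g.eq_C_of_natDegree_eq_zero hg0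
    have hu : IsUnit (g.coeff 0) := hprim _ hgc.symm.dvd
    have : IsUnit g := by rw [hgc]; exact isUnit_C.mpr hu
    exact this.dvd
  | succ n ih =>
    intro g hdeg hprim f S hS hdvd
    by_cases hg0 : g.natDegree = 0
    · have hgc : g = C (g.coeff 0) := g.eq_C_of_natDegree_eq_zero hg0
      have hu : IsUnit (g.coeff 0) := hprim _ hgc.symm.dvd
      have : IsUnit g := by rw [hgc]; exact isUnit_C.mpr hu
      exact this.dvd
    · have hgne : g ≠ 0 := hprim.ne_zero
      have hgu : ¬ IsUnit g := fun hu => hg0 (natDegree_eq_zero_of_isUnit hu)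
      obtain ⟨p, hpirr, hpdvd⟩ := WfDvdMonoid.exists_irreducible_factor hgu hgne
      have hpdeg : 1 ≤ p.natDegree := by
        by_contra hc
        have hp0 : p.natDegree = 0 := by omega
        have hp : p = C (p.coeff 0) := p.eq_C_of_natDegree_eq_zero hp0
        have hu : IsUnit (p.coeff 0) := hprim _ (hp ▸ hpdvd)
        exact hpirr.not_isUnit (hp ▸ isUnit_C.mpr hu)
      obtain ⟨I, hI, hIH⟩ := h f p hpirr hpdeg
      obtain ⟨g1, hg1⟩ := hpdvd
      have hpne : p ≠ 0 := hpirr.ne_zero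
      have hg1ne : g1 ≠ 0 := by rintro rfl; rw [mul_zero] at hg1; exact hgne hg1
      have hroots_g : ({k | g.eval k = 0} : Set D).Finite := Polynomial.finite_setOf_isRoot hgne
      have hroots_p : ({k | p.eval k = 0} : Set D).Finite := Polynomial.finite_setOf_isRoot hpne
      have hpf : p ∣ f := by
        apply hIH (I \ (S ∪ {k | g.eval k = 0})) Set.diff_subset
          (hI.diff (hS.union hroots_g))
        intro k hk _
        have hkS : k ∉ S := fun hks => hk.2 (Or.inl hks)
        have hgk : g.eval k ≠ 0 := fun hz => hk.2 (Or.inr hz)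
        have hpg : p.eval k ∣ g.eval k := by rw [hg1, eval_mul]; exact dvd_mul_right _ _
        exact hpg.trans (hdvd k hkS hgk)
      obtain ⟨f1, hf1⟩ := hpf
      have hg1deg : g1.natDegree ≤ n := by
        have hnd := natDegree_mul hpne hg1ne
        rw [hg1] at hdeg
        rw [hnd] at hdeg
        omega
      have hg1prim : g1.IsPrimitive := fun r hr =>
        hprim _ (hr.trans ⟨p, by rw [hg1, mul_comm]⟩)
      have hdvd1 : g1 ∣ f1 := by
        apply ih g1 hg1deg hg1prim f1 (S ∪ {k | p.eval k = 0}) (hS.union hroots_p)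
        intro k hk hg1k
        have hkS : k ∉ S := fun h' => hk (Or.inl h')
        have hpk : p.eval k ≠ 0 := fun h' => hk (Or.inr h')
        have hgk : g.eval k ≠ 0 := by rw [hg1, eval_mul]; exact mul_ne_zero hpk hg1k
        have hd := hdvd k hkS hgk
        rw [hg1, hf1, eval_mul, eval_mul] at hd
        exact (mul_dvd_mul_iff_left hpk).mp hd
      rw [hg1, hf1]
      exact mul_dvd_mul_left p hdvd1

theorem SEPP_implies_EPP (D : Type*) [CommRing D] [IsDomain D]
    [UniqueFactorizationMonoid D] (h : SEPP D) : EPP D := by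
  intro f g hprim hdeg hdvd
  exact aux_SEPP_EPP D h g.natDegree g le_rfl hprim f ∅ Set.finite_empty
    (fun k _ hk => hdvd k hk)
end

section
/- Let D be a unique factorization domain. If D satisfies the infinite primes property (IPP), then D satisfies the strong evaluation polynomial property (SEPP). -/
open Polynomial

section Aux

variable {D : Type*} [CommRing D] [IsDomain D]

/-- From a finite set we can find an arithmetic progression (modulo a power of a fixed
nonzero nonunit) avoiding it. -/
lemma avoid_finite {E : Set D} (hE : E.Finite) {m : D} (hm : m ≠ 0) (hmu : ¬IsUnit m) :
    ∃ z N, ∀ t : D, z + m ^ N * t ∉ E := by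
  classical
  set n := hE.toFinset.card + 1 with hn
  by_contra hcon
  push_neg at hcon
  choose T hT using hcon
  -- the map i ↦ m^i + m^n * T (m^i) n lands in E and is injective on Fin n
  have key : ∀ i j : ℕ, i < j → j < n →
      m ^ i + m ^ n * T (m ^ i) n ≠ m ^ j + m ^ n * T (m ^ j) n := by
    intro i j hij hjn heq
    set ti := T (m ^ i) n
    set tj := T (m ^ j) n
    have e1 : m ^ n = m ^ i * m ^ (n - i) := by rw [← pow_add]; congr 1; omega
    have e2 : m ^ j = m ^ i * m ^ (j - i) := by rw [← pow_add]; congr 1; omega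
    have h2 : m ^ i * (1 + m ^ (n - i) * ti) = m ^ i * (m ^ (j - i) + m ^ (n - i) * tj) := by
      calc m ^ i * (1 + m ^ (n - i) * ti) = m ^ i + m ^ n * ti := by rw [e1]; ring
        _ = m ^ j + m ^ n * tj := heq
        _ = m ^ i * (m ^ (j - i) + m ^ (n - i) * tj) := by rw [e1, e2]; ring
    have h3 := mul_left_cancel₀ (pow_ne_zero i hm) h2
    have e3 : m ^ (j - i) = m * m ^ (j - i - 1) := by rw [← pow_succ']; congr 1; omega
    have e4 : m ^ (n - i) = m * m ^ (n - i - 1) := by rw [← pow_succ']; congr 1; omega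
    have hdvd : m ∣ 1 := by
      refine ⟨m ^ (j - i - 1) + m ^ (n - i - 1) * tj - m ^ (n - i - 1) * ti, ?_⟩
      calc (1 : D) = m ^ (j - i) + m ^ (n - i) * tj - m ^ (n - i) * ti := by
            linear_combination h3
        _ = m * (m ^ (j - i - 1) + m ^ (n - i - 1) * tj - m ^ (n - i - 1) * ti) := by
            rw [e3, e4]; ring
    exact hmu (isUnit_of_dvd_one hdvd)
  have hF : Function.Injective
      (fun i : Fin n => (⟨m ^ (i : ℕ) + m ^ n * T (m ^ (i : ℕ)) n,
        hE.mem_toFinset.mpr (hT (m ^ (i : ℕ)) n)⟩ : hE.toFinset)) := by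
    intro i j hijeq
    by_contra hne
    have hval : m ^ (i : ℕ) + m ^ n * T (m ^ (i : ℕ)) n
        = m ^ (j : ℕ) + m ^ n * T (m ^ (j : ℕ)) n := congrArg Subtype.val hijeq
    rcases lt_trichotomy (i : ℕ) (j : ℕ) with hlt | heqn | hgt
    · exact key _ _ hlt j.isLt hval
    · exact hne (Fin.ext heqn)
    · exact key _ _ hgt i.isLt hval.symm
  have hcard := Fintype.card_le_of_injective _ hF
  rw [Fintype.card_fin, Fintype.card_coe] at hcard
  omega

variable [UniqueFactorizationMonoid D]

/-- Key kernel lemma: over a UFD with the IPP, there is no nonconstant polynomial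
all of whose values are associated to a fixed nonzero element. -/
lemma kernel_lemma [Infinite D] (h : IPP D) :
    ∀ w : D, w ≠ 0 → ∀ G : D[X], 1 ≤ G.natDegree →
      (∀ t : D, Associated (G.eval t) w) → False := by
  intro w
  refine (wellFounded_dvdNotUnit (α := D)).induction
    (C := fun w => w ≠ 0 → ∀ G : D[X], 1 ≤ G.natDegree →
      (∀ t : D, Associated (G.eval t) w) → False) w ?_
  clear w
  intro x IH hx0 G hdeg hvals
  by_cases hu : IsUnit x
  · obtain ⟨p, hp, k, hk0, hpk⟩ := (h G hdeg).nonempty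
    exact hp.not_unit (isUnit_of_dvd_unit hpk ((hvals k).symm.isUnit hu))
  · obtain ⟨p, hpirr, hpdvd⟩ := WfDvdMonoid.exists_irreducible_factor hu hx0
    have hp : Prime p := UniqueFactorizationMonoid.irreducible_iff_prime.mp hpirr
    obtain ⟨w', rfl⟩ := hpdvd
    have hw'0 : w' ≠ 0 := fun h0 => hx0 (by rw [h0, mul_zero])
    -- the composed polynomial is divisible by C p
    have hcoeff : C p ∣ G.comp (C p * X) := by
      rw [comp_eq_sum_left, Polynomial.sum_def]
      refine Finset.dvd_sum ?_
      intro i _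
      rcases Nat.eq_zero_or_pos i with rfl | hi
      · simp only [pow_zero, mul_one]
        have h0 : p ∣ G.eval 0 := dvd_trans (dvd_mul_right p w') ((hvals 0).symm.dvd)
        rw [← coeff_zero_eq_eval_zero] at h0
        exact map_dvd C h0
      · have hCp : C p ∣ (C p * X) ^ i :=
          (dvd_mul_right (C p) X).trans (dvd_pow_self _ (by omega))
        exact hCp.mul_left _
    obtain ⟨G₁, hG₁⟩ := hcoeff
    have heval : ∀ t : D, p * G₁.eval t = G.eval (p * t) := by
      intro t
      have := congrArg (eval t) hG₁
      simp only [eval_comp, eval_mul, eval_C, eval_X] at this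
      exact this.symm
    have hvals' : ∀ t : D, Associated (G₁.eval t) w' := by
      intro t
      refine Associated.of_mul_left ?_ (Associated.refl p) hp.ne_zero
      rw [heval t]
      exact hvals (p * t)
    have hdeg' : 1 ≤ G₁.natDegree := by
      by_contra hd
      push_neg at hd
      have hG₁C : G₁ = C (G₁.coeff 0) := eq_C_of_natDegree_eq_zero (by omega)
      have hconst : ∀ t : D, G.eval (p * t) = p * G₁.coeff 0 := by
        intro t
        rw [← heval t]
        conv_lhs => rw [hG₁C]
        rw [eval_C]
      have hinf : {x : D | (G - C (p * G₁.coeff 0)).IsRoot x}.Infinite := by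
        refine Set.Infinite.mono ?_
          (Set.infinite_range_of_injective (mul_right_injective₀ hp.ne_zero))
        rintro x ⟨t, rfl⟩
        simp only [Set.mem_setOf_eq, IsRoot, eval_sub, eval_C]
        rw [hconst t, sub_self]
      have hzero := Polynomial.eq_zero_of_infinite_isRoot _ hinf
      have : G = C (p * G₁.coeff 0) := by
        have := sub_eq_zero.mp hzero
        exact this
      rw [this, natDegree_C] at hdeg
      omega
    exact IH w' ⟨hw'0, p, hpirr.not_isUnit, mul_comm p w'⟩ hw'0 G₁ hdeg' hvals'

/-- Bezout-type identity: if `g` is irreducible of positive degree and does not divide `f`,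
then some nonzero constant is a combination of `g` and `f`. -/
lemma exists_bezout_const (f g : D[X]) (hg : Irreducible g) (hdeg : 1 ≤ g.natDegree)
    (hndvd : ¬ g ∣ f) : ∃ c : D, c ≠ 0 ∧ ∃ A B : D[X], A * g + B * f = C c := by
  classical
  letI : NormalizationMonoid D := UniqueFactorizationMonoid.normalizationMonoid.toNormalizationMonoid
  letI : NormalizedGCDMonoid D := UniqueFactorizationMonoid.toNormalizedGCDMonoid D
  set K := FractionRing D
  have hinj : Function.Injective (algebraMap D K) := IsFractionRing.injective D K
  have hminj : Function.Injective (Polynomial.map (algebraMap D K)) :=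
    Polynomial.map_injective _ hinj
  have hg0 : g ≠ 0 := fun h0 => by simp [h0] at hdeg
  have hprim : g.IsPrimitive := by
    rw [Polynomial.isPrimitive_iff_isUnit_of_C_dvd]
    intro r hr
    obtain ⟨q, hq⟩ := hr
    rcases hg.isUnit_or_isUnit hq with h1 | h1
    · exact Polynomial.isUnit_C.mp h1
    · exfalso
      have hq0 : q.natDegree = 0 := natDegree_eq_zero_of_isUnit h1
      have := natDegree_mul_le (p := C r) (q := q)
      rw [← hq] at this
      rw [natDegree_C, hq0] at this
      omega
  have hgK : Irreducible (g.map (algebraMap D K)) :=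
    (hprim.irreducible_iff_irreducible_map_fraction_map (K := K)).mp hg
  have hndvdK : ¬ g.map (algebraMap D K) ∣ f.map (algebraMap D K) := by
    rintro ⟨r, hr⟩
    obtain ⟨s, hs⟩ := IsLocalization.integerNormalization_map_to_map (nonZeroDivisors D) r
    rw [Algebra.smul_def, Polynomial.algebraMap_apply] at hs
    have hs0 : (s : D) ≠ 0 := nonZeroDivisors.coe_ne_zero s
    have key : g * IsLocalization.integerNormalization (nonZeroDivisors D) r = C (s : D) * f := by
      apply hminj
      rw [Polynomial.map_mul, Polynomial.map_mul, hs, Polynomial.map_C, hr]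
      ring
    have hgprime : Prime g := UniqueFactorizationMonoid.irreducible_iff_prime.mp hg
    have hdvd : g ∣ C (s : D) * f := ⟨_, key.symm⟩
    rcases hgprime.2.2 _ _ hdvd with h1 | h1
    · have hCne : C (s : D) ≠ (0 : D[X]) := by
        simpa only [Ne, Polynomial.C_eq_zero] using hs0
      have := Polynomial.natDegree_le_of_dvd h1 hCne
      rw [natDegree_C] at this
      omega
    · exact hndvd h1
  set gK := g.map (algebraMap D K) with hgKdef
  set fK := f.map (algebraMap D K) with hfKdef
  obtain ⟨e, he⟩ := EuclideanDomain.gcd_dvd_left gK fK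
  have hdu : IsUnit (EuclideanDomain.gcd gK fK) := by
    rcases hgK.isUnit_or_isUnit he with h1 | h1
    · exact h1
    · exfalso
      apply hndvdK
      have hgd : gK ∣ EuclideanDomain.gcd gK fK := by
        refine ⟨↑h1.unit⁻¹, ?_⟩
        rw [Units.eq_mul_inv_iff_mul_eq, h1.unit_spec]
        exact he.symm
      exact hgd.trans (EuclideanDomain.gcd_dvd_right _ _)
  obtain ⟨u, hu⟩ := hdu
  have hbez := EuclideanDomain.gcd_eq_gcd_ab gK fK
  set a := EuclideanDomain.gcdA gK fK * ↑u⁻¹ with hadef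
  set b := EuclideanDomain.gcdB gK fK * ↑u⁻¹ with hbdef
  have h1 : gK * a + fK * b = 1 := by
    calc gK * a + fK * b
        = (gK * EuclideanDomain.gcdA gK fK + fK * EuclideanDomain.gcdB gK fK) * ↑u⁻¹ := by
          rw [hadef, hbdef]; ring
      _ = EuclideanDomain.gcd gK fK * ↑u⁻¹ := by rw [← hbez]
      _ = 1 := by rw [← hu, Units.mul_inv]
  obtain ⟨da, hda⟩ := IsLocalization.integerNormalization_map_to_map (nonZeroDivisors D) a
  obtain ⟨db, hdb⟩ := IsLocalization.integerNormalization_map_to_map (nonZeroDivisors D) b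
  rw [Algebra.smul_def, Polynomial.algebraMap_apply] at hda hdb
  set A := IsLocalization.integerNormalization (nonZeroDivisors D) a with hAdef
  set B := IsLocalization.integerNormalization (nonZeroDivisors D) b with hBdef
  refine ⟨(da : D) * (db : D),
    mul_ne_zero (nonZeroDivisors.coe_ne_zero da) (nonZeroDivisors.coe_ne_zero db),
    C (db : D) * A, C (da : D) * B, ?_⟩
  apply hminj
  rw [Polynomial.map_add, Polynomial.map_mul, Polynomial.map_mul, Polynomial.map_mul,
    Polynomial.map_mul, hda, hdb, Polynomial.map_C, Polynomial.map_C, Polynomial.map_C,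
    map_mul, C_mul]
  linear_combination (C ((algebraMap D K) ↑da) * C ((algebraMap D K) ↑db)) * h1

end Aux

theorem IPP_implies_SEPP (D : Type*) [CommRing D] [IsDomain D]
    [UniqueFactorizationMonoid D] (h : IPP D) : SEPP D := by
  intro f g hg hdeg
  have hXdeg : 1 ≤ (X : D[X]).natDegree := by simp
  haveI : Infinite D := by
    have hX := (h X hXdeg).to_subtype
    exact Infinite.of_injective _ (Subtype.coe_injective
      (p := fun p : D => p ∈ {p : D | Prime p ∧ ∃ k : D, (X : D[X]).eval k ≠ 0 ∧ p ∣ (X : D[X]).eval k}))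
  by_cases hgf : g ∣ f
  · exact ⟨Set.univ, Set.infinite_univ, fun _ _ _ _ => hgf⟩
  refine ⟨{k : D | g.eval k ≠ 0 ∧ ¬ g.eval k ∣ f.eval k}, ?_, ?_⟩
  · -- this set is infinite
    by_contra hfin
    rw [Set.not_infinite] at hfin
    obtain ⟨c, hc0, A, B, hABc⟩ := exists_bezout_const f g hg hdeg hgf
    obtain ⟨p0, hp0, -⟩ := (h X hXdeg).nonempty
    have hg0 : g ≠ 0 := fun h0 => by simp [h0] at hdeg
    have hroots : {k : D | g.eval k = 0}.Finite := by
      by_contra hrf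
      exact hg0 (Polynomial.eq_zero_of_infinite_isRoot g hrf)
    have hE : ({k : D | g.eval k ≠ 0 ∧ ¬ g.eval k ∣ f.eval k} ∪ {k : D | g.eval k = 0}).Finite :=
      hfin.union hroots
    obtain ⟨z, N, hzN⟩ := avoid_finite hE hp0.ne_zero hp0.not_unit
    set α := p0 ^ N * c ^ 2 with hα
    have hα0 : α ≠ 0 := mul_ne_zero (pow_ne_zero _ hp0.ne_zero) (pow_ne_zero _ hc0)
    have hmem : ∀ t : D, z + α * t ∉
        ({k : D | g.eval k ≠ 0 ∧ ¬ g.eval k ∣ f.eval k} ∪ {k : D | g.eval k = 0}) := by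
      intro t
      have := hzN (c ^ 2 * t)
      rwa [← mul_assoc, ← hα] at this
    have hne : ∀ t : D, g.eval (z + α * t) ≠ 0 := fun t h0 => hmem t (Or.inr h0)
    have hdvdc : ∀ t : D, g.eval (z + α * t) ∣ c := by
      intro t
      have h1 : g.eval (z + α * t) ∣ f.eval (z + α * t) := by
        by_contra hnd
        exact hmem t (Or.inl ⟨hne t, hnd⟩)
      have h2 : A.eval (z + α * t) * g.eval (z + α * t)
          + B.eval (z + α * t) * f.eval (z + α * t) = c := by
        have := congrArg (eval (z + α * t)) hABc
        simpa using this
      rw [← h2]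
      exact dvd_add (dvd_mul_left _ _) (h1.mul_left _)
    have hz0' : g.eval z ≠ 0 := by
      have := hne 0
      rwa [mul_zero, add_zero] at this
    have hzc : g.eval z ∣ c := by
      have := hdvdc 0
      rwa [mul_zero, add_zero] at this
    have hassoc : ∀ t : D, Associated (g.eval (z + α * t)) (g.eval z) := by
      intro t
      have hdiff : (z + α * t) - z ∣ g.eval (z + α * t) - g.eval z := sub_dvd_eval_sub _ _ g
      have hc2 : c ^ 2 ∣ (z + α * t) - z := by
        have hzz : (z + α * t) - z = c ^ 2 * (p0 ^ N * t) := by rw [hα]; ring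
        rw [hzz]; exact dvd_mul_right _ _
      have hchain : ∀ u : D, u ∣ c → u ∣ g.eval (z + α * t) - g.eval z := by
        intro u hu
        calc u ∣ u ^ 2 := dvd_pow_self u two_ne_zero
          _ ∣ c ^ 2 := pow_dvd_pow_of_dvd hu 2
          _ ∣ (z + α * t) - z := hc2
          _ ∣ _ := hdiff
      refine associated_of_dvd_dvd ?_ ?_
      · have hu := hchain _ (hdvdc t)
        have := dvd_sub (dvd_refl (g.eval (z + α * t))) hu
        simpa using this
      · have hv := hchain _ hzc
        have := dvd_add hv (dvd_refl (g.eval z))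
        simpa using this
    set G := g.comp (C α * X + C z) with hG
    have hGeval : ∀ t : D, G.eval t = g.eval (z + α * t) := by
      intro t
      rw [hG, eval_comp]
      simp only [eval_add, eval_mul, eval_C, eval_X]
      rw [add_comm]
    have hGdeg : 1 ≤ G.natDegree := by
      rw [hG, natDegree_comp, natDegree_linear hα0, mul_one]
      exact hdeg
    have hGvals : ∀ t : D, Associated (G.eval t) (g.eval z) := by
      intro t
      rw [hGeval t]
      exact hassoc t
    exact kernel_lemma h (g.eval z) hz0' G hGdeg hGvals
  · -- the defining property of I
    intro H hHI hHinf hdvd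
    obtain ⟨k, hk⟩ := hHinf.nonempty
    obtain ⟨hk0, hknd⟩ := hHI hk
    exact absurd (hdvd k hk hk0) hknd
end

section
/- Let D be a unique factorization domain that contains at least one prime element and has only finitely many units. Then D satisfies the evaluation polynomial property (EPP). -/
open Polynomial

section Aux

variable {D : Type*} [CommRing D] [IsDomain D] [UniqueFactorizationMonoid D]

lemma aux_infinite {p : D} (hp : Prime p) : Infinite D := by
  refine Infinite.of_injective (fun n : ℕ => p ^ n) ?_
  intro m n hmn
  simp only at hmn
  by_contra hne
  have key : ∀ a b : ℕ, a < b → p ^ a = p ^ b → False := by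
    intro a b hab hpow
    have h0 : p ^ a ≠ 0 := pow_ne_zero _ hp.ne_zero
    have hmul : p ^ a * p ^ (b - a) = p ^ a * 1 := by
      rw [mul_one, ← pow_add]
      have hba : a + (b - a) = b := by omega
      rw [hba, ← hpow]
    have h1 : p ^ (b - a) = 1 := mul_left_cancel₀ h0 hmul
    exact hp.not_unit (isUnit_of_dvd_one ((dvd_pow_self p (by omega : b - a ≠ 0)).trans h1.dvd))
  rcases lt_trichotomy m n with h | h | h
  · exact key m n h hmn
  · exact hne h
  · exact key n m h hmn.symm

lemma aux_pigeon [Finite Dˣ] (P : D[X]) (hP : 1 ≤ P.natDegree) {a : D} (ha : a ≠ 0)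
    {S : Set D} (hS : S.Infinite) (h : ∀ k ∈ S, P.eval k ∣ a) : False := by
  haveI : Fintype Dˣ := Fintype.ofFinite _
  have hfin : ({x : D | x ∣ a}).Finite :=
    Set.finite_coe_iff.mp (@Finite.of_fintype _ (UniqueFactorizationMonoid.fintypeSubtypeDvd a ha))
  have hsub : S ⊆ ⋃ v ∈ {x : D | x ∣ a}, {k : D | P.eval k = v} := by
    intro k hk
    exact Set.mem_biUnion (h k hk) rfl
  have hfib : ∀ v : D, ({k : D | P.eval k = v}).Finite := by
    intro v
    have hne : P - C v ≠ 0 := by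
      intro hzero
      have : P = C v := by rwa [sub_eq_zero] at hzero
      rw [this, natDegree_C] at hP
      omega
    have := Polynomial.finite_setOf_isRoot hne
    refine this.subset ?_
    intro k hk
    simp only [Set.mem_setOf_eq] at hk ⊢
    simp [IsRoot, hk]
  exact hS (((hfin.biUnion (fun v _ => hfib v)).subset hsub))

variable (K : Type*) [Field K] [Algebra D K] [IsFractionRing D K]

lemma aux_clear (q : K[X]) :
    ∃ (c : D) (q' : D[X]), c ≠ 0 ∧ q'.map (algebraMap D K) = C (algebraMap D K c) * q := by
  obtain ⟨b, hb⟩ := IsLocalization.integerNormalization_map_to_map (nonZeroDivisors D) q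
  refine ⟨b, IsLocalization.integerNormalization (nonZeroDivisors D) q,
    nonZeroDivisors.coe_ne_zero b, ?_⟩
  rw [hb]
  ext i
  simp [Algebra.smul_def]

end Aux

section Core

variable {D : Type*} [CommRing D] [IsDomain D] [UniqueFactorizationMonoid D] [Finite Dˣ]

lemma aux_core [Infinite D] :
    ∀ (n : ℕ) (g h : D[X]), 1 ≤ g.natDegree → h.natDegree ≤ n → h.degree < g.degree →
      (∀ k : D, g.eval k ≠ 0 → g.eval k ∣ h.eval k) → h = 0 := by
  intro n
  induction n using Nat.strong_induction_on with
  | _ n ih =>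
  intro g h hgdeg hhn hdeg hdvd
  by_contra hh
  classical
  set K := FractionRing D with hK
  set φ := algebraMap D K with hφ
  have hinj : Function.Injective φ := IsFractionRing.injective D K
  have hmapinj : Function.Injective (Polynomial.map φ) := Polynomial.map_injective φ hinj
  have hg0 : g ≠ 0 := fun hg => by simp [hg] at hgdeg
  have hmg0 : g.map φ ≠ 0 := fun hm => hg0 (hmapinj (by simpa using hm))
  have hmh0 : h.map φ ≠ 0 := fun hm => hh (hmapinj (by simpa using hm))
  have hdegmap : ∀ q : D[X], (q.map φ).degree = q.degree :=
    fun q => degree_map_eq_of_injective hinj q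
  have hSinf : ({k : D | g.eval k ≠ 0}).Infinite := by
    have hfin : ({k : D | g.eval k = 0}).Finite := Polynomial.finite_setOf_isRoot hg0
    have h2 := hfin.infinite_compl
    have h3 : ({k : D | g.eval k = 0}ᶜ : Set D) = {k : D | g.eval k ≠ 0} := by
      ext k; simp
    rwa [h3] at h2
  obtain ⟨d, hd⟩ : ∃ d : K[X], d = EuclideanDomain.gcd (g.map φ) (h.map φ) := ⟨_, rfl⟩
  have hdg : d ∣ g.map φ := hd ▸ EuclideanDomain.gcd_dvd_left _ _
  have hdh : d ∣ h.map φ := hd ▸ EuclideanDomain.gcd_dvd_right _ _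
  have hd0 : d ≠ 0 := by
    intro h0; rw [hd] at h0
    exact hmg0 ((EuclideanDomain.gcd_eq_zero_iff.mp h0).1)
  have hdle : d.degree ≤ (h.map φ).degree := degree_le_of_dvd hdh hmh0
  rcases lt_or_eq_of_le hdle with hlt | heq
  · -- gcd has degree < deg h : reduce the degree
    obtain ⟨A, hA'⟩ : ∃ A : K[X], A = EuclideanDomain.gcdA (g.map φ) (h.map φ) := ⟨_, rfl⟩
    obtain ⟨B, hB'⟩ : ∃ B : K[X], B = EuclideanDomain.gcdB (g.map φ) (h.map φ) := ⟨_, rfl⟩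
    have hbez : d = g.map φ * A + h.map φ * B := by
      rw [hd, hA', hB']; exact EuclideanDomain.gcd_eq_gcd_ab _ _
    obtain ⟨cA, A', hcA, hA⟩ := aux_clear (D := D) K A
    obtain ⟨cB, B', hcB, hB⟩ := aux_clear (D := D) K B
    obtain ⟨cD, d', hcD, hD⟩ := aux_clear (D := D) K d
    have key : C (cA * cB) * d' = C (cB * cD) * g * A' + C (cA * cD) * h * B' := by
      apply hmapinj
      simp only [Polynomial.map_add, Polynomial.map_mul, map_C, map_mul, C_mul]
      rw [hA, hB, hD, hbez]
      ring
    obtain ⟨ht, hht⟩ : ∃ ht : D[X], ht = C (cA * cB) * d' := ⟨_, rfl⟩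
    have hcDK : φ cD ≠ 0 := fun hc => hcD (hinj (by simpa using hc))
    have hd'0 : d' ≠ 0 := by
      intro h0
      rw [h0, Polynomial.map_zero] at hD
      rcases mul_eq_zero.mp hD.symm with h1 | h1
      · exact hcDK (C_eq_zero.mp h1)
      · exact hd0 h1
    have hdd' : d'.degree = d.degree := by
      have h1 : (d'.map φ).degree = d'.degree := hdegmap d'
      rw [hD] at h1
      rw [← h1, degree_mul, degree_C hcDK, zero_add]
    have hht0 : ht ≠ 0 := by
      rw [hht]
      intro h0
      rcases mul_eq_zero.mp h0 with h1 | h1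
      · exact mul_ne_zero hcA hcB (C_eq_zero.mp h1)
      · exact hd'0 h1
    have hhtdeg : ht.degree < h.degree := by
      rw [hht, degree_mul, degree_C (mul_ne_zero hcA hcB), zero_add, hdd']
      rw [hdegmap h] at hlt
      exact hlt
    have hhtdvd : ∀ k : D, g.eval k ≠ 0 → g.eval k ∣ ht.eval k := by
      intro k hk
      have hkey := congrArg (Polynomial.eval k) key
      simp only [eval_add, eval_mul, eval_C] at hkey
      rw [hht]
      simp only [eval_mul, eval_C]
      rw [hkey]
      obtain ⟨t, htk⟩ := hdvd k hk
      refine dvd_add ⟨cB * cD * A'.eval k, by ring⟩ ⟨cA * cD * t * B'.eval k, by rw [htk]; ring⟩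
    have hnat : ht.natDegree < n := by
      have h1 : ht.natDegree < h.natDegree := natDegree_lt_natDegree hht0 hhtdeg
      omega
    have hgt : ht.degree < g.degree := lt_trans hhtdeg hdeg
    exact hht0 (ih ht.natDegree hnat g ht hgdeg le_rfl hgt hhtdvd)
  · -- gcd has same degree as h : then map h divides map g
    obtain ⟨e, he⟩ := hdh
    have he0 : e ≠ 0 := by
      intro h0; rw [h0, mul_zero] at he; exact hmh0 he
    have hedeg : e.degree = 0 := by
      have hmul : (d * e).degree = d.degree + e.degree := degree_mul
      rw [← he, ← heq] at hmul
      rw [Polynomial.degree_eq_natDegree hd0, Polynomial.degree_eq_natDegree he0] at hmul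
      rw [Polynomial.degree_eq_natDegree he0]
      norm_cast at hmul ⊢
      omega
    obtain ⟨a, ha⟩ : ∃ a : K, a = e.coeff 0 := ⟨_, rfl⟩
    have hea : e = C a := by rw [ha]; exact Polynomial.eq_C_of_degree_le_zero (le_of_eq hedeg)
    have ha0 : a ≠ 0 := fun h0 => he0 (by rw [hea, h0, map_zero])
    have hCa : C a * C a⁻¹ = (1 : K[X]) := by rw [← C_mul, mul_inv_cancel₀ ha0, C_1]
    obtain ⟨w, hw⟩ := hdg
    obtain ⟨Q, hQdef⟩ : ∃ Q : K[X], Q = C a⁻¹ * w := ⟨_, rfl⟩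
    have hQ : g.map φ = h.map φ * Q := by
      rw [hQdef, he, hea, hw]
      linear_combination (-(d * w)) * hCa
    have hQ0 : Q ≠ 0 := by
      intro h0
      rw [h0, mul_zero] at hQ
      exact hmg0 hQ
    have hQdeg : 0 < Q.degree := by
      by_contra hle
      push_neg at hle
      have h1 : (g.map φ).degree = (h.map φ).degree + Q.degree := by
        rw [hQ, degree_mul]
      have h2 : (g.map φ).degree ≤ (h.map φ).degree := by
        rw [h1]
        calc (h.map φ).degree + Q.degree ≤ (h.map φ).degree + 0 := add_le_add_right hle _
          _ = (h.map φ).degree := by rw [add_zero]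
      rw [hdegmap, hdegmap] at h2
      exact absurd hdeg (not_lt.mpr h2)
    obtain ⟨c, Q', hc, hQ'⟩ := aux_clear (D := D) K Q
    have hcK : φ c ≠ 0 := fun hc0 => hc (hinj (by simpa using hc0))
    have keyQ : C c * g = h * Q' := by
      apply hmapinj
      simp only [Polynomial.map_mul, map_C]
      rw [hQ', hQ]
      ring
    have hQ'deg : 1 ≤ Q'.natDegree := by
      have h1 : Q'.degree = Q.degree := by
        have h2 : (Q'.map φ).degree = Q'.degree := hdegmap Q'
        rw [hQ'] at h2
        rw [← h2, degree_mul, degree_C hcK, zero_add]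
      have h3 : 0 < Q'.degree := h1 ▸ hQdeg
      exact natDegree_pos_iff_degree_pos.mpr h3
    refine aux_pigeon Q' hQ'deg hc hSinf ?_
    intro k hk
    simp only [Set.mem_setOf_eq] at hk
    obtain ⟨t, htk⟩ := hdvd k hk
    have hev := congrArg (Polynomial.eval k) keyQ
    simp only [eval_mul, eval_C] at hev
    rw [htk] at hev
    have h2 : g.eval k * c = g.eval k * (t * Q'.eval k) := by linear_combination hev
    have h3 : c = t * Q'.eval k := mul_left_cancel₀ hk h2
    exact Dvd.intro_left t h3.symm

end Core

theorem EPP_of_exists_prime_of_finite_units (D : Type*) [CommRing D] [IsDomain D]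
    [UniqueFactorizationMonoid D] (hp : ∃ p : D, Prime p) (hu : Finite Dˣ) :
    EPP D := by
  classical
  haveI := hu
  obtain ⟨p, hprime⟩ := hp
  haveI : Infinite D := aux_infinite hprime
  intro f g hgprim hgdeg hdvd
  set K := FractionRing D
  set φ := algebraMap D K with hφ
  have hinj : Function.Injective φ := IsFractionRing.injective D K
  have hmapinj : Function.Injective (Polynomial.map φ) := Polynomial.map_injective φ hinj
  have hg0 : g ≠ 0 := fun hg => by simp [hg] at hgdeg
  have hmg0 : g.map φ ≠ 0 := fun hm => hg0 (hmapinj (by simpa using hm))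
  have hdegmap : ∀ q : D[X], (q.map φ).degree = q.degree :=
    fun q => degree_map_eq_of_injective hinj q
  -- monicize the image of g
  have hlead : g.leadingCoeff ≠ 0 := leadingCoeff_ne_zero.mpr hg0
  have hleadK : φ g.leadingCoeff ≠ 0 := fun hc => hlead (hinj (by simpa using hc))
  set G1 : K[X] := g.map φ * C (φ g.leadingCoeff)⁻¹ with hG1
  have hG1monic : G1.Monic := by
    have h1 := monic_mul_leadingCoeff_inv hmg0
    rwa [leadingCoeff_map_of_injective hinj] at h1
  set q := (f.map φ) /ₘ G1 with hq
  set r := (f.map φ) %ₘ G1 with hr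
  have hfqr : r + G1 * q = f.map φ := modByMonic_add_div (f.map φ) G1
  have hrdeg : r.degree < G1.degree := degree_modByMonic_lt _ hG1monic
  have hG1deg : G1.degree = g.degree := by
    rw [hG1, degree_mul, degree_C (inv_ne_zero hleadK), add_zero, hdegmap]
  obtain ⟨cq, q', hcq, hq'⟩ := aux_clear (D := D) K q
  obtain ⟨cr, r', hcr, hr'⟩ := aux_clear (D := D) K r
  have hcqK : φ cq ≠ 0 := fun hc => hcq (hinj (by simpa using hc))
  have hcrK : φ cr ≠ 0 := fun hc => hcr (hinj (by simpa using hc))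
  have hinvmul : C (φ g.leadingCoeff) * C (φ g.leadingCoeff)⁻¹ = (1 : K[X]) := by
    rw [← C_mul, mul_inv_cancel₀ hleadK, C_1]
  have key : C (g.leadingCoeff * cq * cr) * f = C cr * g * q' + C (g.leadingCoeff * cq) * r' := by
    apply hmapinj
    simp only [Polynomial.map_mul, Polynomial.map_add, map_C, map_mul]
    rw [hq', hr', ← hfqr, hG1]
    linear_combination (C (φ cq) * C (φ cr) * Polynomial.map φ g * q) * hinvmul
  obtain ⟨ht, hht⟩ : ∃ ht : D[X], ht = C (g.leadingCoeff * cq) * r' := ⟨_, rfl⟩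
  have hr'deg : r'.degree = r.degree := by
    have h2 : (r'.map φ).degree = r'.degree := hdegmap r'
    rw [hr'] at h2
    rw [← h2, degree_mul, degree_C hcrK, zero_add]
  have htdeg : ht.degree < g.degree := by
    have h1 : ht.degree ≤ r'.degree := by
      rw [hht]
      calc (C (g.leadingCoeff * cq) * r').degree ≤ (C (g.leadingCoeff * cq)).degree + r'.degree :=
        degree_mul_le _ _
        _ ≤ 0 + r'.degree := add_le_add_left (degree_C_le) _
        _ = r'.degree := zero_add _
    calc ht.degree ≤ r'.degree := h1
      _ = r.degree := hr'deg
      _ < G1.degree := hrdeg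
      _ = g.degree := hG1deg
  have htdvd : ∀ k : D, g.eval k ≠ 0 → g.eval k ∣ ht.eval k := by
    intro k hk
    have hkey := congrArg (Polynomial.eval k) key
    simp only [eval_add, eval_mul, eval_C] at hkey
    obtain ⟨t, htk⟩ := hdvd k hk
    refine ⟨g.leadingCoeff * cq * cr * t - cr * q'.eval k, ?_⟩
    rw [hht]
    simp only [eval_mul, eval_C]
    rw [htk] at hkey
    linear_combination (-1 : D) * hkey
  have htzero : ht = 0 := aux_core ht.natDegree g ht hgdeg le_rfl htdeg htdvd
  have hr'0 : r' = 0 := by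
    rw [hht] at htzero
    rcases mul_eq_zero.mp htzero with h1 | h1
    · exact absurd (C_eq_zero.mp h1) (mul_ne_zero hlead hcq)
    · exact h1
  have hr0 : r = 0 := by
    have := hr'
    rw [hr'0, Polynomial.map_zero] at this
    rcases mul_eq_zero.mp this.symm with h1 | h1
    · exact absurd (C_eq_zero.mp h1) hcrK
    · exact h1
  have hmdvd : g.map φ ∣ f.map φ := by
    refine ⟨C (φ g.leadingCoeff)⁻¹ * q, ?_⟩
    rw [← hfqr, hr0, zero_add, hG1]; ring
  -- Gauss's lemma
  letI : NormalizationMonoid D := UniqueFactorizationMonoid.normalizationMonoid.toNormalizationMonoid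
  letI : NormalizedGCDMonoid D := UniqueFactorizationMonoid.toNormalizedGCDMonoid D
  by_cases hf : f = 0
  · rw [hf]; exact dvd_zero g
  · have hcont : φ f.content ≠ 0 := fun hc =>
      hf (content_eq_zero_iff.mp (hinj (by simpa using hc)))
    have hmdvdpp : g.map φ ∣ (f.primPart).map φ := by
      obtain ⟨s, hs⟩ := hmdvd
      refine ⟨C (φ f.content)⁻¹ * s, ?_⟩
      have h1 : f.map φ = C (φ f.content) * (f.primPart).map φ := by
        conv_lhs => rw [f.eq_C_content_mul_primPart]
        rw [Polynomial.map_mul, map_C]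
      have hCc : C (φ f.content) * C (φ f.content)⁻¹ = (1 : K[X]) := by
        rw [← C_mul, mul_inv_cancel₀ hcont, C_1]
      have h2 : C (φ f.content) * (f.primPart).map φ = g.map φ * (C (φ f.content) * (C (φ f.content)⁻¹ * s)) := by
        rw [← h1, hs]
        linear_combination (-(Polynomial.map φ g * s)) * hCc
      have h3 : C (φ f.content) * (f.primPart).map φ = C (φ f.content) * (g.map φ * (C (φ f.content)⁻¹ * s)) := by
        rw [h2]; ring
      exact mul_left_cancel₀ (by simpa [C_eq_zero] using hcont) h3
    have := hgprim.dvd_of_fraction_map_dvd_fraction_map hmdvdpp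
    exact this.trans (primPart_dvd f)
end

section
/- Let f, g ∈ ℤ[x] with g ≠ 0 be polynomials such that g(k) ∣ f(k) in ℤ for all but finitely many k ∈ ℤ. Then g divides f in ℚ[x]; that is, f/g is a polynomial with rational coefficients. In particular, ℤ is a D-ring. -/
open Polynomial

def IsDRing (D : Type*) [CommRing D] [IsDomain D] : Prop :=
  ∀ f g : D[X], g ≠ 0 → {k : D | ¬ g.eval k ∣ f.eval k}.Finite →
    g.map (algebraMap D (FractionRing D)) ∣ f.map (algebraMap D (FractionRing D))

open Filter

lemma aux_ev_lt (P Q : ℤ[X]) (h : P.degree < Q.degree) :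
    ∀ᶠ k : ℤ in atTop, |P.eval k| < |Q.eval k| := by
  have hQ : Q ≠ 0 := fun h0 => by simp [h0] at h
  set Pr := P.map (Int.castRingHom ℝ) with hPr
  set Qr := Q.map (Int.castRingHom ℝ) with hQr
  have hinj : Function.Injective (Int.castRingHom ℝ) := Int.cast_injective
  have hdeg : Pr.degree < Qr.degree := by
    rwa [hPr, hQr, degree_map_eq_of_injective hinj, degree_map_eq_of_injective hinj]
  have hQr0 : Qr ≠ 0 := by
    simp [hQr, Polynomial.map_eq_zero_iff hinj, hQ]
  have t : Tendsto (fun x => |Pr.eval x / Qr.eval x|) atTop (nhds 0) := by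
    simpa using (Polynomial.div_tendsto_zero_of_degree_lt Pr Qr hdeg).abs
  have h1 : ∀ᶠ x : ℝ in atTop, |Pr.eval x| < |Qr.eval x| := by
    filter_upwards [t.eventually_lt_const one_pos, Polynomial.eventually_no_roots Qr hQr0]
      with x hx hroot
    have hq0 : Qr.eval x ≠ 0 := hroot
    have : |Pr.eval x| = |Pr.eval x / Qr.eval x| * |Qr.eval x| := by
      rw [abs_div, div_mul_cancel₀]
      exact abs_ne_zero.mpr hq0
    rw [this]
    calc |Pr.eval x / Qr.eval x| * |Qr.eval x| < 1 * |Qr.eval x| := by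
          exact mul_lt_mul_of_pos_right hx (abs_pos.mpr hq0)
      _ = |Qr.eval x| := one_mul _
  have h2 := (tendsto_intCast_atTop_atTop (R := ℝ)).eventually h1
  filter_upwards [h2] with k hk
  rw [hPr, hQr, Polynomial.eval_intCast_map, Polynomial.eval_intCast_map] at hk
  have : |((P.eval k : ℤ) : ℝ)| < |((Q.eval k : ℤ) : ℝ)| := hk
  exact_mod_cast this

lemma int_dvd_rat (f g : ℤ[X]) (hg : g ≠ 0)
    (hfin : {k : ℤ | ¬ g.eval k ∣ f.eval k}.Finite) :
    g.map (algebraMap ℤ ℚ) ∣ f.map (algebraMap ℤ ℚ) := by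
  have hinj : Function.Injective (algebraMap ℤ ℚ) := Int.cast_injective
  set f' := f.map (algebraMap ℤ ℚ) with hf'
  set g' := g.map (algebraMap ℤ ℚ) with hg'
  have hg'0 : g' ≠ 0 := by
    rw [hg', Ne, Polynomial.map_eq_zero_iff hinj]; exact hg
  set q := f' / g' with hq
  set r := f' % g' with hr
  have hfqr : g' * q + r = f' := EuclideanDomain.div_add_mod f' g'
  have hrd : r.degree < g'.degree := EuclideanDomain.mod_lt _ hg'0
  obtain ⟨n₁, hQ⟩ := IsLocalization.integerNormalization_map_to_map (nonZeroDivisors ℤ) q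
  obtain ⟨n₂, hR⟩ := IsLocalization.integerNormalization_map_to_map (nonZeroDivisors ℤ) r
  set Q : ℤ[X] := IsLocalization.integerNormalization (nonZeroDivisors ℤ) q
  set R : ℤ[X] := IsLocalization.integerNormalization (nonZeroDivisors ℤ) r
  have hn₁ : (n₁ : ℤ) ≠ 0 := nonZeroDivisors.coe_ne_zero n₁
  have hn₂ : (n₂ : ℤ) ≠ 0 := nonZeroDivisors.coe_ne_zero n₂
  set N : ℤ := (n₁ : ℤ) * (n₂ : ℤ) with hN
  have hN0 : N ≠ 0 := mul_ne_zero hn₁ hn₂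
  set A : ℤ[X] := C (n₂ : ℤ) * Q with hA
  set B : ℤ[X] := C (n₁ : ℤ) * R with hB
  -- key identity in ℤ[X]
  have key : C N * f = g * A + B := by
    apply Polynomial.map_injective (algebraMap ℤ ℚ) hinj
    simp only [hA, hB, Polynomial.map_add, Polynomial.map_mul, map_C]
    rw [hQ, hR, ← hf', ← hg', ← hfqr, hN]
    simp only [zsmul_eq_mul, algebraMap_int_eq, eq_intCast, C_mul, C_eq_intCast]
    push_cast
    ring
  have hBmap : B.map (algebraMap ℤ ℚ) = C ((N : ℚ)) * r := by
    rw [hB, Polynomial.map_mul, map_C, hR, hN]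
    simp only [zsmul_eq_mul, algebraMap_int_eq, eq_intCast, C_mul, C_eq_intCast]
    push_cast
    ring
  have hBd : B.degree < g.degree := by
    have h1 : B.degree = (B.map (algebraMap ℤ ℚ)).degree :=
      (degree_map_eq_of_injective hinj B).symm
    have h2 : g.degree = g'.degree := (degree_map_eq_of_injective hinj g).symm
    rw [h1, hBmap, h2]
    calc (C ((N : ℚ)) * r).degree = r.degree := degree_C_mul (by exact_mod_cast hN0)
      _ < g'.degree := hrd
  have hdvd : ∀ᶠ k : ℤ in atTop, g.eval k ∣ f.eval k := by
    have h0 : ∀ᶠ k : ℤ in cofinite, g.eval k ∣ f.eval k :=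
      Filter.eventually_cofinite.mpr hfin
    exact h0.filter_mono (Int.cofinite_eq ▸ le_sup_right)
  have hB0 : ∀ᶠ k : ℤ in atTop, B.eval k = 0 := by
    filter_upwards [hdvd, aux_ev_lt B g hBd] with k hk hlt
    have hdB : g.eval k ∣ B.eval k := by
      have hev : B.eval k = N * f.eval k - g.eval k * A.eval k := by
        have h3 := congrArg (Polynomial.eval k) key
        simp only [eval_mul, eval_add, eval_C] at h3
        linarith [h3]
      rw [hev]
      exact dvd_sub (hk.mul_left N) (Dvd.intro _ rfl)
    by_contra hBk
    have hpos : 0 < |B.eval k| := abs_pos.mpr hBk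
    have hle : |g.eval k| ≤ |B.eval k| :=
      Int.le_of_dvd hpos ((abs_dvd _ _).mpr ((dvd_abs _ _).mpr hdB))
    omega
  have hBzero : B = 0 := by
    apply Polynomial.eq_zero_of_infinite_isRoot
    obtain ⟨M, hM⟩ := Filter.eventually_atTop.mp hB0
    exact (Set.Ici_infinite M).mono fun k hk => hM k hk
  have hr0 : r = 0 := by
    have h4 : C ((N : ℚ)) * r = 0 := by rw [← hBmap, hBzero, Polynomial.map_zero]
    rcases mul_eq_zero.mp h4 with h | h
    · exact absurd (C_eq_zero.mp h) (by exact_mod_cast hN0)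
    · exact h
  exact ⟨q, by rw [← hfqr, hr0, add_zero]⟩

theorem int_is_DRing :
    (∀ f g : ℤ[X], g ≠ 0 → {k : ℤ | ¬ g.eval k ∣ f.eval k}.Finite →
      g.map (algebraMap ℤ ℚ) ∣ f.map (algebraMap ℤ ℚ)) ∧ IsDRing ℤ := by
  refine ⟨int_dvd_rat, ?_⟩
  intro f g hg hfin
  have h := int_dvd_rat f g hg hfin
  set ψ : ℚ →+* FractionRing ℤ := ((FractionRing.algEquiv ℤ ℚ).symm : ℚ →ₐ[ℤ] FractionRing ℤ).toRingHom with hψ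
  have hc : ψ.comp (algebraMap ℤ ℚ) = algebraMap ℤ (FractionRing ℤ) := by
    ext n
    simp [hψ]
  have h2 := map_dvd (mapRingHom ψ) h
  simp only [coe_mapRingHom] at h2
  rwa [Polynomial.map_map, Polynomial.map_map, hc] at h2
end

section
/- Let D be an integral domain that is not a field. Then D is not a D-ring if and only if there exists a nonconstant polynomial f ∈ D[x] such that f(k) is a unit of D for every k ∈ D. -/
open Polynomial

section Aux

variable {D : Type*} [CommRing D] [IsDomain D]

private lemma key_dvd (p : D[X]) (m k₀ : D) :
    (C m : D[X]) ∣ p.comp (C m * X + C k₀) - C (p.eval k₀) := by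
  induction p using Polynomial.induction_on' with
  | add p q hp hq =>
      have : (p + q).comp (C m * X + C k₀) - C ((p + q).eval k₀)
          = (p.comp (C m * X + C k₀) - C (p.eval k₀))
            + (q.comp (C m * X + C k₀) - C (q.eval k₀)) := by
        simp [add_comp, eval_add, C_add]; ring
      rw [this]
      exact dvd_add hp hq
  | monomial n a =>
      have h1 : ((C m * X + C k₀ : D[X]) - C k₀) ∣
          ((C m * X + C k₀ : D[X]) ^ n - (C k₀ : D[X]) ^ n) :=
        sub_dvd_pow_sub_pow _ _ n
      have h2 : ((C m * X + C k₀ : D[X]) - C k₀) = C m * X := by ring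
      rw [h2] at h1
      have h3 : (C m : D[X]) ∣ (C m * X + C k₀ : D[X]) ^ n - (C k₀ : D[X]) ^ n :=
        dvd_trans (Dvd.intro _ rfl) h1
      have h4 : (monomial n a).comp (C m * X + C k₀) - C ((monomial n a).eval k₀)
          = C a * ((C m * X + C k₀ : D[X]) ^ n - (C k₀ : D[X]) ^ n) := by
        rw [← C_mul_X_pow_eq_monomial]
        simp [mul_comp, pow_comp, eval_mul, eval_pow, C_mul, C_pow]
        ring
      rw [h4]
      exact Dvd.dvd.mul_left h3 _

private lemma affine_natDegree {m : D} (hm : m ≠ 0) (b : D) (p : D[X]) :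
    (p.comp (C m * X + C b)).natDegree = p.natDegree := by
  rw [natDegree_comp, natDegree_linear hm, mul_one]

private lemma pow_residue {d : D} (hd0 : d ≠ 0) (hdu : ¬ IsUnit d)
    {i j N : ℕ} (hij : i < j) (hjN : j ≤ N) : ¬ d ^ N ∣ d ^ i - d ^ j := by
  rintro ⟨x, hx⟩
  apply hdu
  obtain ⟨a, ha⟩ : ∃ a, j - i = a + 1 := ⟨j - i - 1, by omega⟩
  obtain ⟨b, hb⟩ : ∃ b, N - i = b + 1 := ⟨N - i - 1, by omega⟩
  have h1 : d ^ i * (1 - d ^ (j - i)) = d ^ i * (d ^ (N - i) * x) := by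
    rw [mul_sub, mul_one, ← pow_add, ← mul_assoc, ← pow_add,
      Nat.add_sub_cancel' hij.le, Nat.add_sub_cancel' (hij.le.trans hjN)]
    exact hx
  have h2 : 1 - d ^ (j - i) = d ^ (N - i) * x :=
    mul_left_cancel₀ (pow_ne_zero _ hd0) h1
  refine IsUnit.of_mul_eq_one (a := d) (d ^ a + d ^ b * x) ?_
  have : (1 : D) = d ^ (j - i) + d ^ (N - i) * x := by
    rw [← h2]; ring
  rw [this, ha, hb, pow_succ, pow_succ]
  ring

private lemma exists_avoid (hD : ¬ IsField D) {T : Set D} (hT : T.Finite) :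
    ∃ m b : D, m ≠ 0 ∧ ∀ k : D, m * k + b ∉ T := by
  obtain ⟨d, hd0, hdu⟩ : ∃ d : D, d ≠ 0 ∧ ¬ IsUnit d := by
    by_contra hcon
    push_neg at hcon
    exact hD ⟨exists_pair_ne D, mul_comm, fun {a} ha => (hcon a ha).exists_right_inv⟩
  set N := hT.toFinset.card + 1 with hN
  have hmain : ∃ i : Fin N, ∀ t ∈ T, ¬ d ^ N ∣ t - d ^ (i : ℕ) := by
    by_contra hcon
    push_neg at hcon
    have hcon' : ∀ i : Fin N, ∃ t : D, t ∈ hT.toFinset ∧ d ^ N ∣ t - d ^ (i : ℕ) := by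
      intro i
      obtain ⟨t, ht, hdvd⟩ := hcon i
      exact ⟨t, hT.mem_toFinset.2 ht, hdvd⟩
    choose F hF1 hF2 using hcon'
    have key : ∀ i j : Fin N, F i = F j → d ^ N ∣ d ^ (i : ℕ) - d ^ (j : ℕ) := by
      intro i j hij
      have h1 := hF2 i
      have h2 := hF2 j
      rw [hij] at h1
      have h3 := h2.sub h1
      have heq : F j - d ^ (j : ℕ) - (F j - d ^ (i : ℕ)) = d ^ (i : ℕ) - d ^ (j : ℕ) := by ring
      rwa [heq] at h3
    have hinj : Function.Injective F := by
      intro i j hij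
      by_contra hne
      rcases Ne.lt_or_gt (fun h : (i : ℕ) = (j : ℕ) => hne (Fin.ext h)) with h | h
      · exact pow_residue hd0 hdu h (j.2.le) (key i j hij)
      · exact pow_residue hd0 hdu h (i.2.le) (key j i hij.symm)
    have hcard : N ≤ hT.toFinset.card := by
      have := Finset.card_le_card_of_injOn (s := (Finset.univ : Finset (Fin N)))
        (t := hT.toFinset) F (fun a _ => hF1 a) hinj.injOn
      simpa using this
    omega
  obtain ⟨i, hi⟩ := hmain
  refine ⟨d ^ N, d ^ (i : ℕ), pow_ne_zero _ hd0, fun k hk => ?_⟩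
  exact hi _ hk ⟨k, by ring⟩

private lemma lemB (hD : ¬ IsField D) {f₁ : D[X]} (hdeg : 1 ≤ f₁.natDegree)
    {T : Set D} (hT : T.Finite) (hu : ∀ k ∉ T, IsUnit (f₁.eval k)) :
    ∃ f : D[X], 1 ≤ f.natDegree ∧ ∀ k, IsUnit (f.eval k) := by
  obtain ⟨m, b, hm, havoid⟩ := exists_avoid hD hT
  refine ⟨f₁.comp (C m * X + C b), ?_, fun k => ?_⟩
  · rw [affine_natDegree hm]; exact hdeg
  · rw [eval_comp]
    simp only [eval_add, eval_mul, eval_C, eval_X]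
    exact hu _ (havoid k)

private lemma lemA (hD : ¬ IsField D) {P : D[X]} (hdeg : 1 ≤ P.natDegree)
    {e : D} (he : e ≠ 0) {S : Set D} (hS : Sᶜ.Finite) (hdvd : ∀ k ∈ S, P.eval k ∣ e) :
    ∃ f : D[X], 1 ≤ f.natDegree ∧ ∀ k, IsUnit (f.eval k) := by
  have hinf : Infinite D := by
    by_contra hfin
    rw [not_infinite_iff_finite] at hfin
    exact hD (Finite.isField_of_domain D)
  obtain ⟨k₀, hk₀⟩ : S.Nonempty := by
    have h1 := hS.infinite_compl
    rw [compl_compl] at h1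
    exact h1.nonempty
  set c := P.eval k₀ with hc
  have hce : c ∣ e := hdvd k₀ hk₀
  have hc0 : c ≠ 0 := by
    intro h0
    rw [h0] at hce
    exact he (zero_dvd_iff.mp hce)
  set m := c * e ^ 2 with hm
  have hm0 : m ≠ 0 := mul_ne_zero hc0 (pow_ne_zero _ he)
  obtain ⟨W, hW⟩ := key_dvd P m k₀
  set f₁ : D[X] := C (e ^ 2) * W + 1 with hf₁
  have hQ : P.comp (C m * X + C k₀) = C c * f₁ := by
    have : P.comp (C m * X + C k₀) = C m * W + C c := by
      rw [← hW]; ring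
    rw [this, hf₁, hm, C_mul]
    ring
  have hdeg₁ : 1 ≤ f₁.natDegree := by
    have h1 := affine_natDegree hm0 k₀ P
    rw [hQ, natDegree_C_mul hc0] at h1
    omega
  have hT : {k : D | m * k + k₀ ∉ S}.Finite := by
    have hinj : Function.Injective (fun k : D => m * k + k₀) := by
      intro a b hab
      exact mul_left_cancel₀ hm0 (add_right_cancel hab)
    exact Set.Finite.preimage hinj.injOn hS
  refine lemB hD hdeg₁ hT (fun k hk => ?_)
  rw [Set.mem_setOf_eq, not_not] at hk
  have h1 : c * f₁.eval k ∣ e := by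
    have h2 := hdvd _ hk
    have h3 : P.eval (m * k + k₀) = c * f₁.eval k := by
      have h4 : P.eval (m * k + k₀) = (P.comp (C m * X + C k₀)).eval k := by
        rw [eval_comp]; simp
      rw [h4, hQ, eval_mul, eval_C]
    rwa [h3] at h2
  obtain ⟨u, hu⟩ := h1
  obtain ⟨v, hv⟩ := hce
  have hfv : f₁.eval k * u = v := by
    apply mul_left_cancel₀ hc0
    calc c * (f₁.eval k * u) = c * f₁.eval k * u := by ring
      _ = e := hu.symm
      _ = c * v := hv
  have hfe : f₁.eval k ∣ e := ⟨u * c, by rw [hv, ← hfv]; ring⟩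
  have heval : f₁.eval k = e ^ 2 * W.eval k + 1 := by simp [hf₁]
  have h5 : f₁.eval k ∣ e ^ 2 * W.eval k :=
    Dvd.dvd.mul_right (hfe.trans (dvd_pow_self e two_ne_zero)) _
  have hone : f₁.eval k ∣ 1 := by
    have h6 := (dvd_refl (f₁.eval k)).sub h5
    rw [heval, add_sub_cancel_left] at h6
    rw [heval]
    exact h6
  exact isUnit_of_dvd_one hone

private lemma clear_denom (p : (FractionRing D)[X]) :
    ∃ (c : D) (P : D[X]), c ≠ 0 ∧
      P.map (algebraMap D (FractionRing D)) = C (algebraMap D (FractionRing D) c) * p := by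
  obtain ⟨b, hb⟩ := IsLocalization.integerNormalization_map_to_map (nonZeroDivisors D) p
  refine ⟨(b : D), IsLocalization.integerNormalization (nonZeroDivisors D) p,
    nonZeroDivisors.ne_zero b.2, ?_⟩
  rw [hb, ← smul_eq_C_mul, algebraMap_smul]

end Aux

theorem not_DRing_iff_exists_unit_valued_poly (D : Type*) [CommRing D] [IsDomain D]
    (hD : ¬ IsField D) :
    ¬ IsDRing D ↔ ∃ f : D[X], 1 ≤ f.natDegree ∧ ∀ k : D, IsUnit (f.eval k) := by
  classical
  set K := FractionRing D
  set φ := algebraMap D K with hφdef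
  have hφ : Function.Injective φ := IsFractionRing.injective D K
  have evmap : ∀ (p : D[X]) (k : D), (p.map φ).eval (φ k) = φ (p.eval k) := by
    intro p k
    rw [eval_map, eval₂_at_apply]
  constructor
  · intro hnot
    rw [IsDRing] at hnot
    push_neg at hnot
    obtain ⟨f, g, hg, hfin, hnd⟩ := hnot
    set g' := g.map φ with hg'def
    set f' := f.map φ with hf'def
    have hg' : g' ≠ 0 := (Polynomial.map_ne_zero_iff hφ).2 hg
    set h := EuclideanDomain.gcd g' f' with hhdef
    have hh0 : h ≠ 0 := fun h0 => hg' (EuclideanDomain.gcd_eq_zero_iff.mp h0).1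
    obtain ⟨G, hG⟩ : h ∣ g' := EuclideanDomain.gcd_dvd_left _ _
    have hbez := EuclideanDomain.gcd_eq_gcd_ab g' f'
    have hG0 : G ≠ 0 := by
      rintro rfl
      rw [mul_zero] at hG
      exact hg' hG
    have hGdeg : 1 ≤ G.natDegree := by
      by_contra hcon
      push_neg at hcon
      have hGC : G = C (G.coeff 0) := eq_C_of_natDegree_eq_zero (by omega)
      have hγ : IsUnit (C (G.coeff 0) : K[X]) := by
        rw [isUnit_C]
        refine isUnit_iff_ne_zero.2 (fun h0 => hG0 ?_)
        rw [hGC, h0, map_zero]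
      apply hnd
      have hγ0 : G.coeff 0 ≠ 0 := fun h0 => hG0 (by rw [hGC, h0, map_zero])
      have h9 : G * C (G.coeff 0)⁻¹ = 1 := by
        conv_lhs => rw [hGC]
        rw [← C_mul, coeff_C_zero, mul_inv_cancel₀ hγ0, C_1]
      have hgh : g' ∣ h := ⟨C (G.coeff 0)⁻¹, by rw [hG, mul_assoc, h9, mul_one]⟩
      exact hgh.trans (EuclideanDomain.gcd_dvd_right _ _)
    obtain ⟨c, P, hc, hP⟩ := clear_denom G
    obtain ⟨d₁, A, hd₁, hA⟩ := clear_denom (EuclideanDomain.gcdA g' f')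
    obtain ⟨d₂, B, hd₂, hB⟩ := clear_denom (EuclideanDomain.gcdB g' f')
    have hPdeg : 1 ≤ P.natDegree := by
      have hc' : φ c ≠ 0 := fun h0 => hc (hφ (by rw [h0, map_zero]))
      have h1 : P.natDegree = G.natDegree := by
        rw [← natDegree_map_eq_of_injective hφ P, hP, natDegree_C_mul hc']
      omega
    have hSfin : ({k : D | g.eval k ∣ f.eval k} ∩ {k : D | h.eval (φ k) ≠ 0})ᶜ.Finite := by
      rw [Set.compl_inter]
      refine Set.Finite.union hfin ?_
      have hroots : {x : K | h.IsRoot x}.Finite := finite_setOf_isRoot hh0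
      have : {k : D | h.eval (φ k) ≠ 0}ᶜ = φ ⁻¹' {x : K | h.IsRoot x} := by
        ext k; simp [IsRoot]
      rw [this]
      exact Set.Finite.preimage hφ.injOn hroots
    refine lemA hD hPdeg (mul_ne_zero hc (mul_ne_zero hd₁ hd₂))
      (S := {k : D | g.eval k ∣ f.eval k} ∩ {k : D | h.eval (φ k) ≠ 0}) hSfin ?_
    rintro k ⟨hk1, hk2⟩
    obtain ⟨t, ht⟩ := hk1
    have hη : h.eval (φ k) ≠ 0 := hk2
    have hgev : φ (g.eval k) = h.eval (φ k) * G.eval (φ k) := by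
      rw [← evmap, ← hg'def, hG, eval_mul]
    have hbev : h.eval (φ k) = φ (g.eval k) * (EuclideanDomain.gcdA g' f').eval (φ k)
        + φ (g.eval k) * φ t * (EuclideanDomain.gcdB g' f').eval (φ k) := by
      conv_lhs => rw [hhdef, hbez]
      simp only [eval_add, eval_mul, hg'def, hf'def, evmap, ht, map_mul]
      try ring
    have hkey : (1 : K) = G.eval (φ k) * ((EuclideanDomain.gcdA g' f').eval (φ k)
        + φ t * (EuclideanDomain.gcdB g' f').eval (φ k)) := by
      apply mul_left_cancel₀ hη
      rw [mul_one]
      conv_lhs => rw [hbev]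
      rw [hgev]
      ring
    have hmul : φ (c * (d₁ * d₂)) = φ (P.eval k * (A.eval k * d₂ + B.eval k * (d₁ * t))) := by
      have hPev : φ (P.eval k) = φ c * G.eval (φ k) := by
        rw [← evmap, hP, eval_mul, eval_C]
      have hAev : φ (A.eval k) = φ d₁ * (EuclideanDomain.gcdA g' f').eval (φ k) := by
        rw [← evmap, hA, eval_mul, eval_C]
      have hBev : φ (B.eval k) = φ d₂ * (EuclideanDomain.gcdB g' f').eval (φ k) := by
        rw [← evmap, hB, eval_mul, eval_C]
      rw [map_mul, map_mul, map_mul, map_add, map_mul, map_mul, map_mul,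
        hPev, hAev, hBev]
      calc φ c * (φ d₁ * φ d₂)
          = (φ c * (φ d₁ * φ d₂)) * 1 := by ring
        _ = (φ c * (φ d₁ * φ d₂)) * (G.eval (φ k) * ((EuclideanDomain.gcdA g' f').eval (φ k)
            + φ t * (EuclideanDomain.gcdB g' f').eval (φ k))) := by rw [← hkey]
        _ = φ c * G.eval (φ k) * (φ d₁ * (EuclideanDomain.gcdA g' f').eval (φ k) * φ d₂
            + φ d₂ * (EuclideanDomain.gcdB g' f').eval (φ k) * (φ d₁ * φ t)) := by ring
    exact ⟨A.eval k * d₂ + B.eval k * (d₁ * t), hφ hmul⟩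
  · rintro ⟨f, hdeg, hunit⟩ hDR
    have hf0 : f ≠ 0 := fun h0 => by simp [h0] at hdeg
    have h1 := hDR 1 f hf0 (by
      have : {k : D | ¬ f.eval k ∣ (1 : D[X]).eval k} = ∅ := by
        ext k
        simp only [Set.mem_setOf_eq, Set.mem_empty_iff_false, iff_false, not_not, eval_one]
        exact (hunit k).dvd
      rw [this]
      exact Set.finite_empty)
    rw [Polynomial.map_one] at h1
    have h2 : IsUnit (f.map φ) := isUnit_of_dvd_one h1
    have h3 := natDegree_eq_zero_of_isUnit h2
    rw [natDegree_map_eq_of_injective hφ] at h3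
    omega
end

section
/- Let D be an integral domain that is not a field. If the Jacobson radical of D is nonzero, then D is not a D-ring. -/
open Polynomial

theorem not_DRing_of_jacobson_ne_bot (D : Type*) [CommRing D] [IsDomain D]
    (hD : ¬ IsField D) (hJ : (⊥ : Ideal D).jacobson ≠ ⊥) : ¬ IsDRing D := by
  intro h
  obtain ⟨a, haJ, ha0⟩ : ∃ a ∈ (⊥ : Ideal D).jacobson, a ≠ 0 := by
    by_contra hc
    push_neg at hc
    exact hJ (le_antisymm (fun x hx => hc x hx) bot_le)
  set g : D[X] := C a * X + 1 with hg
  have hunit : ∀ k : D, IsUnit (g.eval k) := by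
    intro k
    have h1 := Ideal.mem_jacobson_bot.mp haJ k
    have : g.eval k = a * k + 1 := by
      simp [hg]
    rw [this]
    exact h1
  have hg0 : g ≠ 0 := by
    intro h0
    have := hunit 0
    rw [h0] at this
    simp at this
  have hfin : {k : D | ¬ g.eval k ∣ (1 : D[X]).eval k}.Finite := by
    convert Set.finite_empty
    ext k
    simp [IsUnit.dvd (hunit k)]
  have hdvd := h 1 g hg0 hfin
  rw [Polynomial.map_one] at hdvd
  have hu : IsUnit (g.map (algebraMap D (FractionRing D))) := isUnit_of_dvd_one hdvd
  have hdeg : (g.map (algebraMap D (FractionRing D))).natDegree = 1 := by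
    have ha' : algebraMap D (FractionRing D) a ≠ 0 := by
      simpa using (map_ne_zero_iff _ (IsFractionRing.injective D (FractionRing D))).mpr ha0
    rw [hg]
    rw [Polynomial.map_add, Polynomial.map_mul, Polynomial.map_C, Polynomial.map_X,
      Polynomial.map_one, ← Polynomial.C_1]
    exact natDegree_linear ha'
  rw [Polynomial.isUnit_iff] at hu
  obtain ⟨r, _, hr⟩ := hu
  rw [← hr] at hdeg
  simp at hdeg
end

section
/- Let D be a unique factorization domain. If D is a D-ring, then D satisfies the infinite primes property (IPP). -/
open Polynomial

theorem DRing_implies_IPP (D : Type*) [CommRing D] [IsDomain D]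
    [UniqueFactorizationMonoid D] (h : IsDRing D) : IPP D := by
  classical
  intro g hdeg
  by_contra hinf
  rw [Set.not_infinite] at hinf
  have hg0 : g ≠ 0 := by
    intro h0
    simp [h0] at hdeg
  -- D is infinite
  have hDinf : Infinite D := by
    by_contra hfin
    rw [not_infinite_iff_finite] at hfin
    have hX : (X : D[X]) ≠ 0 := X_ne_zero
    have := h 1 X hX (Set.toFinite _)
    rw [Polynomial.map_one, Polynomial.map_X] at this
    exact Polynomial.not_isUnit_X (isUnit_of_dvd_one this)
  -- find a point where g is nonzero
  have hroots : {x : D | g.IsRoot x}.Finite := by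
    apply Set.Finite.subset g.roots.toFinset.finite_toSet
    intro x hx
    simp only [Multiset.mem_toFinset, Finset.coe_sort_coe, Finset.mem_coe]
    rw [Polynomial.mem_roots hg0]
    exact hx
  obtain ⟨a, ha⟩ := hroots.infinite_compl.nonempty
  have hc : g.eval a ≠ 0 := ha
  set c : D := g.eval a with hc_def
  -- product of all primes in the (assumed finite) set
  set N : D := hinf.toFinset.prod id with hN_def
  have hN0 : N ≠ 0 := by
    rw [hN_def]
    rw [Finset.prod_ne_zero_iff]
    intro p hp
    rw [Set.Finite.mem_toFinset] at hp
    exact hp.1.ne_zero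
  set b : D := c ^ 3 * N with hb_def
  have hb0 : b ≠ 0 := mul_ne_zero (pow_ne_zero _ hc) hN0
  -- decompose the shifted polynomial
  set g₁ : D[X] := g.comp (X + C a) with hg1_def
  have hg1c : g₁.coeff 0 = c := by
    rw [Polynomial.coeff_zero_eq_eval_zero, hg1_def, Polynomial.eval_comp]
    simp [hc_def]
  have hXdvd : X ∣ (g₁ - C c) := by
    rw [Polynomial.X_dvd_iff]
    simp [hg1c]
  obtain ⟨w, hw⟩ := hXdvd
  have hval : ∀ y : D, g.eval (y + a) = c + y * w.eval y := by
    intro y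
    have : g₁.eval y = g.eval (y + a) := by
      rw [hg1_def, Polynomial.eval_comp]
      simp
    have h2 : g₁.eval y - c = y * w.eval y := by
      have := congrArg (Polynomial.eval y) hw
      simpa using this
    rw [← this]
    linear_combination h2
  -- the key polynomial
  set G : D[X] := g.comp (C b * X + C a) with hG_def
  have hGeval : ∀ t : D, G.eval t = g.eval (b * t + a) := by
    intro t
    rw [hG_def, Polynomial.eval_comp]
    simp
  have hGdeg : G.natDegree = g.natDegree := by
    rw [hG_def, Polynomial.natDegree_comp, Polynomial.natDegree_linear hb0, mul_one]
  have hG0 : G ≠ 0 := by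
    intro h0
    rw [h0] at hGdeg
    simp at hGdeg
    omega
  -- claim: all nonzero values of G divide c
  have key : ∀ t : D, G.eval t ≠ 0 → G.eval t ∣ c := by
    intro t hGt
    set u : D := 1 + c ^ 2 * N * t * w.eval (b * t) with hu_def
    have hGu : G.eval t = c * u := by
      rw [hGeval, hval (b * t), hu_def, hb_def]
      ring
    have hu0 : u ≠ 0 := by
      intro h0
      rw [hGu, h0, mul_zero] at hGt
      exact hGt rfl
    have hu_unit : IsUnit u := by
      by_contra hnu
      obtain ⟨q, hq_irr, hqu⟩ := WfDvdMonoid.exists_irreducible_factor hnu hu0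
      have hq : Prime q := UniqueFactorizationMonoid.irreducible_iff_prime.mp hq_irr
      have hqP : q ∈ {p : D | Prime p ∧ ∃ k : D, g.eval k ≠ 0 ∧ p ∣ g.eval k} := by
        refine ⟨hq, b * t + a, ?_, ?_⟩
        · rw [← hGeval]; exact hGt
        · rw [← hGeval, hGu]
          exact Dvd.dvd.mul_left hqu c
      have hqN : q ∣ N := by
        rw [hN_def]
        exact Finset.dvd_prod_of_mem id (hinf.mem_toFinset.mpr hqP)
      have hq1 : q ∣ 1 := by
        have h2 : q ∣ c ^ 2 * N * t * w.eval (b * t) :=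
          Dvd.dvd.mul_right (Dvd.dvd.mul_right (Dvd.dvd.mul_left hqN _) _) _
        have : q ∣ u - c ^ 2 * N * t * w.eval (b * t) := dvd_sub hqu h2
        rw [hu_def] at this
        simpa using this
      exact hq.not_unit (isUnit_of_dvd_one hq1)
    obtain ⟨v, hv⟩ := hu_unit
    refine ⟨(↑v⁻¹ : Dˣ), ?_⟩
    rw [hGu, ← hv, mul_assoc, Units.mul_inv, mul_one]
  -- apply the D-ring property with f = C c
  have hGroots : {x : D | G.eval x = 0}.Finite := by
    apply Set.Finite.subset G.roots.toFinset.finite_toSet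
    intro x hx
    simp only [Multiset.mem_toFinset, Finset.coe_sort_coe, Finset.mem_coe]
    rw [Polynomial.mem_roots hG0]
    exact hx
  have hfin : {k : D | ¬ G.eval k ∣ (C c).eval k}.Finite := by
    apply Set.Finite.subset hGroots
    intro k hk
    simp only [Set.mem_setOf_eq, Polynomial.eval_C] at hk
    by_contra hGk
    exact hk (key k hGk)
  have hdvd := h (C c) G hG0 hfin
  rw [Polynomial.map_C] at hdvd
  have hφ : Function.Injective (algebraMap D (FractionRing D)) :=
    IsFractionRing.injective D (FractionRing D)
  have hφc : algebraMap D (FractionRing D) c ≠ 0 := by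
    intro h0
    exact hc (hφ (by rwa [map_zero]))
  have hle := Polynomial.natDegree_le_of_dvd hdvd (by simpa using hφc)
  rw [Polynomial.natDegree_map_eq_of_injective hφ, hGdeg, Polynomial.natDegree_C] at hle
  omega
end

section
/- Let D be an integral domain. Then D is a D-ring if and only if D satisfies the degree polynomial property (DPP). -/
open Polynomial

theorem DRing_iff_DPP (D : Type*) [CommRing D] [IsDomain D] :
    IsDRing D ↔ DPP D := by
  classical
  set K := FractionRing D
  have hinj : Function.Injective (algebraMap D K) := IsFractionRing.injective D K
  constructor
  · intro hD f g hdiv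
    by_cases hg : g = 0
    · right; simp [hg]
    by_cases hf : f = 0
    · left; exact hf
    right
    have hfin : {k : D | ¬ g.eval k ∣ f.eval k}.Finite := by
      apply (Polynomial.finite_setOf_isRoot hg).subset
      intro k hk
      by_contra hk0
      exact hk (hdiv k hk0)
    have h := hD f g hg hfin
    have hle := Polynomial.natDegree_le_of_dvd h
      (by rwa [Ne, Polynomial.map_eq_zero_iff hinj])
    rwa [Polynomial.natDegree_map_eq_of_injective hinj,
      Polynomial.natDegree_map_eq_of_injective hinj] at hle
  · intro hP f g hg hfin
    set φ := algebraMap D K with hφ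
    set F := f.map φ with hF
    set G := g.map φ with hG
    have hG0 : G ≠ 0 := by rw [hG, Ne, Polynomial.map_eq_zero_iff hinj]; exact hg
    obtain ⟨d, hd⟩ := IsLocalization.integerNormalization_map_to_map
      (nonZeroDivisors D) (F / G)
    set Q := IsLocalization.integerNormalization (nonZeroDivisors D) (F / G) with hQ
    have hd0 : (d : D) ≠ 0 := nonZeroDivisors.coe_ne_zero d
    have hφd : φ (d : D) ≠ 0 := fun hc => hd0 (hinj (by simpa using hc))
    set R : D[X] := C (d : D) * f - Q * g with hR
    have h1 : Q.map φ = C (φ (d : D)) * (F / G) := by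
      rw [hd, ← Polynomial.smul_eq_C_mul, algebraMap_smul]
    have hmapR : R.map φ = C (φ (d : D)) * (F % G) := by
      rw [hR, Polynomial.map_sub, Polynomial.map_mul, Polynomial.map_mul,
        Polynomial.map_C, h1, ← hF, ← hG]
      linear_combination (-(C (φ (d : D)))) * (EuclideanDomain.div_add_mod F G)
    have hdegR : R.degree < g.degree := by
      have h2 : (F % G).degree < G.degree := EuclideanDomain.mod_lt _ hG0
      have h3 : R.degree = (F % G).degree := by
        rw [← Polynomial.degree_map_eq_of_injective hinj R, hmapR]
        by_cases hr0 : F % G = 0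
        · simp [hr0]
        · rw [Polynomial.degree_mul, Polynomial.degree_C hφd, zero_add]
      rw [h3, ← Polynomial.degree_map_eq_of_injective hinj g]
      exact h2
    set B := hfin.toFinset with hB
    set hpoly : D[X] := ∏ b ∈ B, (X - C b) with hh
    have hhmon : hpoly.Monic := monic_prod_of_monic _ _ fun b _ => monic_X_sub_C b
    have hh0 : hpoly ≠ 0 := hhmon.ne_zero
    have key : ∀ k : D, (g * hpoly).eval k ≠ 0 → (g * hpoly).eval k ∣ (R * hpoly).eval k := by
      intro k hk
      rw [Polynomial.eval_mul] at hk ⊢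
      rw [Polynomial.eval_mul]
      have hgk : g.eval k ≠ 0 := left_ne_zero_of_mul hk
      have hhk : hpoly.eval k ≠ 0 := right_ne_zero_of_mul hk
      have hkB : k ∉ B := by
        intro hkB
        apply hhk
        rw [hh, Polynomial.eval_prod]
        exact Finset.prod_eq_zero hkB (by simp)
      have hdvd : g.eval k ∣ f.eval k := by
        by_contra hc
        exact hkB (hfin.mem_toFinset.mpr hc)
      have hdvdR : g.eval k ∣ R.eval k := by
        rw [hR]
        simp only [Polynomial.eval_sub, Polynomial.eval_mul, Polynomial.eval_C]
        exact dvd_sub (hdvd.mul_left _) (dvd_mul_left _ _)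
      exact mul_dvd_mul hdvdR dvd_rfl
    have hR0 : R = 0 := by
      rcases hP (R * hpoly) (g * hpoly) key with h0 | hle
      · exact (mul_eq_zero.mp h0).resolve_right hh0
      · by_contra hRne
        rw [Polynomial.natDegree_mul hg hh0, Polynomial.natDegree_mul hRne hh0] at hle
        have h4 := Polynomial.natDegree_lt_natDegree hRne hdegR
        omega
    have hr0 : F % G = 0 := by
      have h5 : R.map φ = 0 := by rw [hR0, Polynomial.map_zero]
      rw [hmapR] at h5
      rcases mul_eq_zero.mp h5 with h | h
      · exact absurd (Polynomial.C_eq_zero.mp h) hφd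
      · exact h
    exact EuclideanDomain.mod_eq_zero.mp hr0
end

section
/- Let D be a unique factorization domain. Then the following are equivalent: (1) D is a D-ring; (2) D satisfies the infinite primes property (IPP); (3) D satisfies the degree polynomial property (DPP); (4) D satisfies the evaluation polynomial property (EPP); (5) D satisfies the strong evaluation polynomial property (SEPP). -/
open Polynomial

section Aux
variable {D : Type*} [CommRing D] [IsDomain D]

lemma aux_exists_eval_ne_zero [Infinite D] {p : D[X]} (hp : p ≠ 0) : ∃ a : D, p.eval a ≠ 0 := by
  obtain ⟨a, ha⟩ := (Polynomial.finite_setOf_isRoot hp).infinite_compl.nonempty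
  exact ⟨a, ha⟩

lemma aux_comp_linear_dvd (p : D[X]) (a b : D) :
    ∃ H : D[X], p.comp (C a + C b * X) = C (p.eval a) + (C b * X) * H := by
  suffices h : (C b * X : D[X]) ∣ p.comp (C a + C b * X) - C (p.eval a) by
    obtain ⟨H, hH⟩ := h
    exact ⟨H, by linear_combination hH⟩
  induction p using Polynomial.induction_on' with
  | add p q hp hq =>
    rw [add_comp, eval_add, C_add]
    convert dvd_add hp hq using 1
    ring
  | monomial n r =>
    rw [← C_mul_X_pow_eq_monomial, mul_comp, C_comp, pow_comp, X_comp, eval_mul, eval_pow,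
      eval_C, eval_X, C_mul, C_pow]
    have h := sub_dvd_pow_sub_pow (C a + C b * X) (C a) n
    rw [add_sub_cancel_left] at h
    obtain ⟨w, hw⟩ := h
    exact ⟨C r * w, by linear_combination C r * hw⟩

lemma aux_P {g : D[X]} (hg : 1 ≤ g.natDegree) {a : D} (hc : g.eval a ≠ 0) {e : D} (he : e ≠ 0) :
    ∃ P : D[X], 1 ≤ P.natDegree ∧
      (∀ t : D, g.eval (a + g.eval a * e * t) = g.eval a * P.eval t) ∧
      ∀ t : D, e ∣ P.eval t - 1 := by
  obtain ⟨H, hH⟩ := aux_comp_linear_dvd g a (g.eval a * e)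
  set c := g.eval a with hcdef
  have hce : c * e ≠ 0 := mul_ne_zero hc he
  have key : C c * (1 + C e * X * H) = g.comp (C a + C (c * e) * X) := by
    rw [hH, C_mul]; ring
  refine ⟨1 + C e * X * H, ?_, ?_, ?_⟩
  · have h1 : (C a + C (c * e) * X).natDegree = 1 := by
      rw [add_comm]; exact natDegree_linear hce
    have h2 : (g.comp (C a + C (c * e) * X)).natDegree = g.natDegree := by
      rw [natDegree_comp, h1, mul_one]
    rw [← natDegree_C_mul (p := 1 + C e * X * H) hc, key, h2]; exact hg
  · intro t
    have h2 : (g.comp (C a + C (c * e) * X)).eval t = g.eval (a + c * e * t) := by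
      rw [eval_comp]; congr 1; simp; try ring
    have h3 := congrArg (eval t) key
    rw [h2] at h3
    simpa using h3.symm
  · intro t
    refine ⟨t * H.eval t, ?_⟩
    simp; ring

lemma aux_isUnit_of_no_prime [UniqueFactorizationMonoid D] {x : D} (hx : x ≠ 0)
    (h : ∀ q : D, Prime q → ¬ q ∣ x) : IsUnit x := by
  by_contra hu
  obtain ⟨i, hi, hid⟩ := WfDvdMonoid.exists_irreducible_factor hu hx
  exact h i (UniqueFactorizationMonoid.irreducible_iff_prime.mp hi) hid

lemma aux_no_unit_values [UniqueFactorizationMonoid D] [Infinite D] {P : D[X]}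
    (hdeg : 1 ≤ P.natDegree) {T : Set D} (hT : T.Finite)
    (hval : ∀ t ∉ T, P.eval t = 0 ∨ IsUnit (P.eval t))
    (hex : ∃ q k : D, Prime q ∧ P.eval k ≠ 0 ∧ q ∣ P.eval k) : False := by
  obtain ⟨q, k₀, hq, hk0, hqd⟩ := hex
  have hwu : ¬ IsUnit (P.eval k₀) := fun h => hq.not_unit (isUnit_of_dvd_unit hqd h)
  have hw2 : P.eval k₀ ^ 2 ≠ 0 := pow_ne_zero _ hk0
  have key : ∀ t : D, k₀ + P.eval k₀ ^ 2 * t ∉ T → P.eval (k₀ + P.eval k₀ ^ 2 * t) = 0 := by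
    intro t ht
    rcases hval _ ht with h0 | hu
    · exact h0
    exfalso
    have hdvd : P.eval k₀ ^ 2 ∣ P.eval (k₀ + P.eval k₀ ^ 2 * t) - P.eval k₀ := by
      have h := Polynomial.sub_dvd_eval_sub (k₀ + P.eval k₀ ^ 2 * t) k₀ P
      rw [add_sub_cancel_left] at h
      exact (Dvd.intro t rfl).trans h
    have hd1 : P.eval k₀ ∣ P.eval (k₀ + P.eval k₀ ^ 2 * t) - P.eval k₀ :=
      ((sq (P.eval k₀) ▸ dvd_mul_right _ _ : P.eval k₀ ∣ P.eval k₀ ^ 2)).trans hdvd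
    have h1 : P.eval k₀ ∣ P.eval (k₀ + P.eval k₀ ^ 2 * t) := by
      have := dvd_add hd1 (dvd_refl (P.eval k₀))
      rwa [sub_add_cancel] at this
    exact hwu (isUnit_of_dvd_unit h1 hu)
  have hP0 : P ≠ 0 := fun h => by simp [h] at hdeg
  have hinj : Function.Injective (fun t : D => k₀ + P.eval k₀ ^ 2 * t) := by
    intro s t h
    simp only [add_right_inj] at h
    exact mul_left_cancel₀ hw2 h
  have hT' : ((fun t : D => k₀ + P.eval k₀ ^ 2 * t) ⁻¹' T).Finite :=
    hT.preimage hinj.injOn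
  have himg : (fun t : D => k₀ + P.eval k₀ ^ 2 * t) ''
      ((fun t : D => k₀ + P.eval k₀ ^ 2 * t) ⁻¹' T)ᶜ ⊆ {x : D | P.IsRoot x} := by
    rintro x ⟨t, ht, rfl⟩
    exact key t ht
  exact (hT'.infinite_compl.image hinj.injOn) ((Polynomial.finite_setOf_isRoot hP0).subset himg)

end Aux

section Aux2
variable {D : Type*} [CommRing D] [IsDomain D]

lemma aux_infinite_s16 (h : IPP D) : Infinite D := by
  have h1 := h X (by simp)
  exact Set.infinite_univ_iff.mp (h1.mono (Set.subset_univ _))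

lemma aux_key [UniqueFactorizationMonoid D] (hipp : IPP D) {g : D[X]} (hdeg : 1 ≤ g.natDegree)
    {e : D} (he : e ≠ 0) : {k : D | g.eval k ≠ 0 ∧ ¬ g.eval k ∣ e}.Infinite := by
  have hD : Infinite D := aux_infinite_s16 hipp
  by_contra hfin
  rw [Set.not_infinite] at hfin
  have hg0 : g ≠ 0 := fun h => by simp [h] at hdeg
  obtain ⟨a, ha⟩ := aux_exists_eval_ne_zero hg0
  obtain ⟨P, hPdeg, hPeval, hPdvd⟩ := aux_P hdeg ha he
  have hce : g.eval a * e ≠ 0 := mul_ne_zero ha he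
  have hinj : Function.Injective (fun t : D => a + g.eval a * e * t) := by
    intro s t h
    simp only [add_right_inj] at h
    exact mul_left_cancel₀ hce h
  refine aux_no_unit_values hPdeg
    (hfin.preimage (f := fun t : D => a + g.eval a * e * t) hinj.injOn) ?_ ?_
  · intro t ht
    by_cases h0 : P.eval t = 0
    · exact Or.inl h0
    right
    have hgt : g.eval (a + g.eval a * e * t) = g.eval a * P.eval t := hPeval t
    have hne : g.eval (a + g.eval a * e * t) ≠ 0 := by rw [hgt]; exact mul_ne_zero ha h0
    have hdv : g.eval (a + g.eval a * e * t) ∣ e := by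
      by_contra hnd
      exact ht ⟨hne, hnd⟩
    have hPe : P.eval t ∣ e := (Dvd.intro_left _ rfl).trans (hgt ▸ hdv)
    refine aux_isUnit_of_no_prime h0 ?_
    intro q hq hqd
    have h2 : q ∣ P.eval t - 1 := (hqd.trans hPe).trans (hPdvd t)
    have h3 : q ∣ 1 := by
      have := dvd_sub hqd h2
      simpa using this
    exact hq.not_unit (isUnit_of_dvd_one h3)
  · obtain ⟨p, hp, k, hk, hpd⟩ := (hipp P hPdeg).nonempty
    exact ⟨p, k, hp, hk, hpd⟩

lemma aux_S_infinite [UniqueFactorizationMonoid D] {g : D[X]} (hdeg : 1 ≤ g.natDegree)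
    {p₀ : D} (hp₀ : Prime p₀) {k₀ : D} (hk₀ : g.eval k₀ ≠ 0) (hd₀ : p₀ ∣ g.eval k₀) :
    {p : D | Prime p ∧ ∃ k : D, g.eval k ≠ 0 ∧ p ∣ g.eval k}.Infinite := by
  set S := {p : D | Prime p ∧ ∃ k : D, g.eval k ≠ 0 ∧ p ∣ g.eval k} with hSdef
  by_contra hfin
  rw [Set.not_infinite] at hfin
  have hD : Infinite D := by
    rcases finite_or_infinite D with h | h
    · exfalso
      have hf : IsField D := Finite.isField_of_domain D
      obtain ⟨y, hy⟩ := hf.mul_inv_cancel hp₀.ne_zero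
      exact hp₀.not_unit (isUnit_iff_exists_inv.mpr ⟨y, hy⟩)
    · exact h
  -- units are finite
  have hUfin : {x : D | IsUnit x}.Finite := by
    have himg : (fun x : D => x * p₀) '' {x : D | IsUnit x} ⊆ S := by
      rintro y ⟨x, hx, rfl⟩
      obtain ⟨u, rfl⟩ := hx
      have hassoc : Associated p₀ ((u : D) * p₀) := ⟨u, mul_comm p₀ u⟩
      exact ⟨hassoc.prime hp₀, k₀, hk₀, hassoc.symm.dvd.trans hd₀⟩
    have hinj : Set.InjOn (fun x : D => x * p₀) {x : D | IsUnit x} :=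
      fun x _ y _ h => mul_right_cancel₀ hp₀.ne_zero h
    exact Set.Finite.of_finite_image (hfin.subset himg) hinj
  set N := ∏ p ∈ hfin.toFinset, p with hNdef
  have hN0 : N ≠ 0 :=
    Finset.prod_ne_zero_iff.mpr (fun p hp => ((hfin.mem_toFinset.mp hp).1).ne_zero)
  have hg0 : g ≠ 0 := fun h => by simp [h] at hdeg
  obtain ⟨a, ha⟩ := aux_exists_eval_ne_zero hg0
  obtain ⟨P, hPdeg, hPeval, hPdvd⟩ := aux_P hdeg ha hN0
  have hval : ∀ t : D, P.eval t = 0 ∨ IsUnit (P.eval t) := by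
    intro t
    by_cases h0 : P.eval t = 0
    · exact Or.inl h0
    right
    refine aux_isUnit_of_no_prime h0 ?_
    intro q hq hqd
    have hgt := hPeval t
    have hne : g.eval (a + g.eval a * N * t) ≠ 0 := by rw [hgt]; exact mul_ne_zero ha h0
    have hqS : q ∈ S := ⟨hq, _, hne, by rw [hgt]; exact hqd.mul_left _⟩
    have hqN : q ∣ N := Finset.dvd_prod_of_mem _ (hfin.mem_toFinset.mpr hqS)
    have h2 : q ∣ P.eval t - 1 := hqN.trans (hPdvd t)
    have h3 : q ∣ 1 := by
      have := dvd_sub hqd h2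
      simpa using this
    exact hq.not_unit (isUnit_of_dvd_one h3)
  -- pigeonhole: some value is attained infinitely often
  have hVfin : ({(0 : D)} ∪ {x : D | IsUnit x}).Finite := (Set.finite_singleton 0).union hUfin
  have hex : ∃ v ∈ ({(0 : D)} ∪ {x : D | IsUnit x}), {t : D | P.eval t = v}.Infinite := by
    by_contra hc
    push_neg at hc
    have hsub : (Set.univ : Set D) ⊆
        ⋃ v ∈ ({(0 : D)} ∪ {x : D | IsUnit x}), {t : D | P.eval t = v} := by
      intro t _
      rcases hval t with h | h
      · exact Set.mem_biUnion (Set.mem_union_left _ rfl) h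
      · exact Set.mem_biUnion (Set.mem_union_right _ h) rfl
    exact Set.infinite_univ
      ((hVfin.biUnion (fun v hv => hc v hv)).subset hsub)
  obtain ⟨v, hv, hvinf⟩ := hex
  have hPC : P - C v = 0 := by
    by_contra hne
    refine hvinf ((Polynomial.finite_setOf_isRoot hne).subset ?_)
    intro t ht
    simp only [Set.mem_setOf_eq] at ht
    simp [IsRoot, ht]
  have : P = C v := by linear_combination hPC
  rw [this] at hPdeg
  simp at hPdeg

end Aux2


section Main
variable {D : Type*} [CommRing D] [IsDomain D] [UniqueFactorizationMonoid D]

lemma impl_1_3 (h : IsDRing D) : DPP D := by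
  intro f g hdvd
  by_cases hg : g = 0
  · right; simp [hg]
  by_cases hf : f = 0
  · exact Or.inl hf
  right
  have hfin : {k : D | ¬ g.eval k ∣ f.eval k}.Finite := by
    refine (Polynomial.finite_setOf_isRoot hg).subset ?_
    intro k hk
    by_contra hroot
    exact hk (hdvd k hroot)
  have hmap := h f g hg hfin
  have hinj := IsFractionRing.injective D (FractionRing D)
  have hf' : f.map (algebraMap D (FractionRing D)) ≠ 0 := by
    rw [Ne, Polynomial.map_eq_zero_iff hinj]
    exact hf
  have hle := natDegree_le_of_dvd hmap hf'
  rwa [natDegree_map_eq_of_injective hinj, natDegree_map_eq_of_injective hinj] at hle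

lemma impl_3_2 (h : DPP D) : IPP D := by
  intro g hdeg
  rcases Set.eq_empty_or_nonempty {p : D | Prime p ∧ ∃ k : D, g.eval k ≠ 0 ∧ p ∣ g.eval k}
    with hS | hS
  · exfalso
    have hdd : ∀ k : D, g.eval k ≠ 0 → g.eval k ∣ (1 : D[X]).eval k := by
      intro k hk
      rw [eval_one]
      refine (aux_isUnit_of_no_prime hk ?_).dvd
      intro q hq hqd
      have : q ∈ ({p : D | Prime p ∧ ∃ k : D, g.eval k ≠ 0 ∧ p ∣ g.eval k}) := ⟨hq, k, hk, hqd⟩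
      rw [hS] at this
      exact this
    rcases h 1 g hdd with h1 | h1
    · exact one_ne_zero h1
    · rw [natDegree_one] at h1; omega
  · obtain ⟨p₀, hp₀, k₀, hk₀, hd₀⟩ := hS
    exact aux_S_infinite hdeg hp₀ hk₀ hd₀

lemma impl_2_5 (h : IPP D) : SEPP D := by
  classical
  letI : NormalizationMonoid D := UniqueFactorizationMonoid.normalizationMonoid.toNormalizationMonoid
  letI : NormalizedGCDMonoid D := UniqueFactorizationMonoid.toNormalizedGCDMonoid D
  have hD : Infinite D := aux_infinite_s16 h
  intro f g hgirr hgdeg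
  set K := FractionRing D with hK
  set φ := algebraMap D K with hφ
  have hinj : Function.Injective φ := IsFractionRing.injective D K
  have hmapinj : Function.Injective (Polynomial.map φ) := Polynomial.map_injective φ hinj
  have hg0 : g ≠ 0 := hgirr.ne_zero
  have hgK0 : g.map φ ≠ 0 := fun hh => hg0 (hmapinj (by rw [hh, Polynomial.map_zero]))
  have hprim : g.IsPrimitive := by
    intro r hr
    obtain ⟨w, hw⟩ := hr
    rcases hgirr.isUnit_or_isUnit hw with hu | hu
    · exact isUnit_C.mp hu
    · exfalso
      have hC0 : (C r : D[X]) ≠ 0 := fun hh => hg0 (by rw [hw, hh, zero_mul])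
      have hw0 : w ≠ 0 := fun hh => hg0 (by rw [hw, hh, mul_zero])
      have : g.natDegree = 0 := by
        rw [hw, natDegree_mul hC0 hw0, natDegree_C, natDegree_eq_zero_of_isUnit hu]
      omega
  have hgKirr : Irreducible (g.map φ) :=
    (hprim.irreducible_iff_irreducible_map_fraction_map (K := K)).mp hgirr
  -- division with remainder in K[X]
  set gm := g.map φ * C (g.map φ).leadingCoeff⁻¹ with hgm
  have hgmmonic : gm.Monic := monic_mul_leadingCoeff_inv hgK0
  set q : K[X] := C (g.map φ).leadingCoeff⁻¹ * (f.map φ /ₘ gm) with hq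
  set r : K[X] := f.map φ %ₘ gm with hr
  have hdiv : f.map φ = g.map φ * q + r := by
    have h1 := modByMonic_add_div (f.map φ) gm
    rw [← h1, hgm, hq, hr]
    ring
  have hdr : r.degree < (g.map φ).degree := by
    have h1 := degree_modByMonic_lt (f.map φ) hgmmonic
    rwa [hgm, degree_mul_leadingCoeff_inv _ hgK0] at h1
  obtain ⟨d, hd⟩ := IsLocalization.integerNormalization_map_to_map (nonZeroDivisors D) q
  set Q := IsLocalization.integerNormalization (nonZeroDivisors D) q with hQ
  have hd0 : (d : D) ≠ 0 := nonZeroDivisors.coe_ne_zero d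
  have hφd0 : φ (d : D) ≠ 0 := fun hh => hd0 (hinj (by rw [hh, map_zero]))
  set R := C (d : D) * f - Q * g with hR
  have hmapR : R.map φ = C (φ (d : D)) * r := by
    rw [hR, Polynomial.map_sub, Polynomial.map_mul, Polynomial.map_mul, map_C, hd,
      ← algebraMap_smul K (d : D) q, Polynomial.smul_eq_C_mul, hdiv]
    rw [← hφ]
    ring
  by_cases hr0 : r = 0
  · -- remainder zero : g ∣ f
    have hR0 : R = 0 := by
      apply hmapinj
      rw [hmapR, hr0, Polynomial.map_zero, mul_zero]
    have hdvdCdf : g ∣ C (d : D) * f := ⟨Q, by linear_combination hR0⟩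
    have hgprime : Prime g := UniqueFactorizationMonoid.irreducible_iff_prime.mp hgirr
    rcases hgprime.2.2 _ _ hdvdCdf with hcase | hcase
    · exfalso
      have hCd0 : (C (d : D) : D[X]) ≠ 0 := fun hh => hd0 (by simpa using hh)
      have := natDegree_le_of_dvd hcase hCd0
      rw [natDegree_C] at this
      omega
    · exact ⟨Set.univ, Set.infinite_univ, fun H _ _ _ => hcase⟩
  · -- remainder nonzero : the property is impossible on an infinite set
    have hRK0 : R.map φ ≠ 0 := by
      rw [hmapR]
      exact mul_ne_zero (fun hh => hφd0 (by rwa [← C_eq_zero])) hr0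
    have hnd : ¬ g.map φ ∣ R.map φ := by
      intro hdvd
      have h1 := degree_le_of_dvd hdvd hRK0
      rw [hmapR, degree_mul, degree_C hφd0, zero_add] at h1
      exact (not_le.mpr hdr) h1
    have hgcdu : IsUnit (EuclideanDomain.gcd (g.map φ) (R.map φ)) := by
      obtain ⟨c, hc⟩ := EuclideanDomain.gcd_dvd_left (g.map φ) (R.map φ)
      rcases hgKirr.isUnit_or_isUnit hc with hu | hu
      · exact hu
      · exfalso
        apply hnd
        obtain ⟨u, rfl⟩ := hu
        have hassoc : Associated (EuclideanDomain.gcd (g.map φ) (R.map φ)) (g.map φ) :=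
          ⟨u, hc.symm⟩
        exact hassoc.symm.dvd.trans (EuclideanDomain.gcd_dvd_right _ _)
    obtain ⟨u, hu⟩ := hgcdu
    have hbez := EuclideanDomain.gcd_eq_gcd_ab (g.map φ) (R.map φ)
    set A₁ := (↑u⁻¹ : K[X]) * EuclideanDomain.gcdA (g.map φ) (R.map φ) with hA₁
    set B₁ := (↑u⁻¹ : K[X]) * EuclideanDomain.gcdB (g.map φ) (R.map φ) with hB₁
    have hone : g.map φ * A₁ + R.map φ * B₁ = 1 := by
      have h2 : (↑u⁻¹ * ↑u : K[X]) = 1 := u.inv_mul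
      calc g.map φ * A₁ + R.map φ * B₁
          = ↑u⁻¹ * (g.map φ * EuclideanDomain.gcdA (g.map φ) (R.map φ) +
            R.map φ * EuclideanDomain.gcdB (g.map φ) (R.map φ)) := by rw [hA₁, hB₁]; ring
        _ = ↑u⁻¹ * ↑u := by rw [← hbez, hu]
        _ = 1 := h2
    obtain ⟨dA, hdA⟩ := IsLocalization.integerNormalization_map_to_map (nonZeroDivisors D) A₁
    obtain ⟨dB, hdB⟩ := IsLocalization.integerNormalization_map_to_map (nonZeroDivisors D) B₁
    set A := IsLocalization.integerNormalization (nonZeroDivisors D) A₁ with hA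
    set B := IsLocalization.integerNormalization (nonZeroDivisors D) B₁ with hB
    set e := (dA : D) * (dB : D) with he
    have he0 : e ≠ 0 :=
      mul_ne_zero (nonZeroDivisors.coe_ne_zero dA) (nonZeroDivisors.coe_ne_zero dB)
    have hE : C (dB : D) * A * g + C (dA : D) * B * R = C e := by
      apply hmapinj
      rw [Polynomial.map_add, Polynomial.map_mul, Polynomial.map_mul, Polynomial.map_mul,
        Polynomial.map_mul, map_C, map_C, map_C, hdA, hdB,
        ← algebraMap_smul K (dA : D) A₁, ← algebraMap_smul K (dB : D) B₁,
        Polynomial.smul_eq_C_mul, Polynomial.smul_eq_C_mul, he, map_mul, C_mul, ← hφ]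
      linear_combination (C (φ (dA : D)) * C (φ (dB : D))) * hone
    have hIinf := aux_key h hgdeg he0
    refine ⟨{k : D | g.eval k ≠ 0 ∧ ¬ g.eval k ∣ e}, hIinf, ?_⟩
    intro H hHsub hHinf hprop
    exfalso
    obtain ⟨k, hk⟩ := hHinf.nonempty
    obtain ⟨hgk, hgke⟩ := hHsub hk
    have h1 : g.eval k ∣ f.eval k := hprop k hk hgk
    have h2 : g.eval k ∣ R.eval k := by
      rw [hR]
      simp only [eval_sub, eval_mul, eval_C]
      exact dvd_sub (h1.mul_left _) ((dvd_refl _).mul_left _)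
    have h3 : g.eval k ∣ e := by
      have h4 := congrArg (eval k) hE
      simp only [eval_add, eval_mul, eval_C] at h4
      rw [← h4]
      exact dvd_add ((dvd_refl _).mul_left _) (h2.mul_left _)
    exact hgke h3

lemma sepp_aux (hsepp : SEPP D) : ∀ n : ℕ, ∀ g f : D[X], g.natDegree ≤ n → g.IsPrimitive →
    ∀ Z : Set D, Z.Finite → (∀ k ∉ Z, g.eval k ≠ 0 → g.eval k ∣ f.eval k) → g ∣ f := by
  intro n
  induction n with
  | zero =>
    intro g f hdeg hprim Z hZ hdvd
    have h0 : g.natDegree = 0 := Nat.le_zero.mp hdeg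
    have hgC := eq_C_of_natDegree_eq_zero h0
    have hu : IsUnit g := by
      rw [hgC]; exact isUnit_C.mpr (hprim _ (by rw [← hgC]))
    exact hu.dvd
  | succ n ih =>
    intro g f hdeg hprim Z hZ hdvd
    by_cases h0 : g.natDegree = 0
    · have hgC := eq_C_of_natDegree_eq_zero h0
      have hu : IsUnit (g.coeff 0) := hprim _ (by rw [← hgC])
      have : IsUnit g := by rw [hgC]; exact isUnit_C.mpr hu
      exact this.dvd
    have hg0 : g ≠ 0 := hprim.ne_zero
    have hgu : ¬ IsUnit g := fun hh => h0 (natDegree_eq_zero_of_isUnit hh)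
    obtain ⟨g₁, hg₁irr, hg₁dvd⟩ := WfDvdMonoid.exists_irreducible_factor hgu hg0
    obtain ⟨g₂, hfac⟩ := hg₁dvd
    have hg₁0 : g₁ ≠ 0 := hg₁irr.ne_zero
    have hg₂0 : g₂ ≠ 0 := fun hh => hg0 (by rw [hfac, hh, mul_zero])
    have hd₁ : 1 ≤ g₁.natDegree := by
      by_contra hcon
      push_neg at hcon
      have h1 : g₁.natDegree = 0 := by omega
      have h2 := eq_C_of_natDegree_eq_zero h1
      exact hg₁irr.not_isUnit
        (by rw [h2]; exact isUnit_C.mpr (hprim _ (by rw [← h2]; exact ⟨g₂, hfac⟩)))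
    obtain ⟨I, hIinf, hI⟩ := hsepp f g₁ hg₁irr hd₁
    have hH : (I \ (Z ∪ {x : D | g.IsRoot x})).Infinite :=
      hIinf.diff (hZ.union (Polynomial.finite_setOf_isRoot hg0))
    have h1 : g₁ ∣ f := by
      refine hI _ Set.diff_subset hH ?_
      intro k hk _
      obtain ⟨hkI, hk2⟩ := hk
      rw [Set.mem_union, not_or] at hk2
      obtain ⟨hkZ, hkroot⟩ := hk2
      have hgne : g.eval k ≠ 0 := hkroot
      have hdd : g₁.eval k ∣ g.eval k := by rw [hfac, eval_mul]; exact dvd_mul_right _ _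
      exact hdd.trans (hdvd k hkZ hgne)
    obtain ⟨f₁, hf₁⟩ := h1
    have hprim₂ : g₂.IsPrimitive := fun r hr =>
      hprim r (hr.trans ⟨g₁, by rw [hfac]; ring⟩)
    have hdeg₂ : g₂.natDegree ≤ n := by
      have := natDegree_mul hg₁0 hg₂0
      rw [← hfac] at this
      omega
    have h2 : g₂ ∣ f₁ := by
      refine ih g₂ f₁ hdeg₂ hprim₂ (Z ∪ {x : D | g₁.IsRoot x})
        (hZ.union (Polynomial.finite_setOf_isRoot hg₁0)) ?_
      intro k hk hg₂ne
      rw [Set.mem_union, not_or] at hk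
      obtain ⟨hkZ, hkroot⟩ := hk
      have hg₁ne : g₁.eval k ≠ 0 := hkroot
      have hgne : g.eval k ≠ 0 := by rw [hfac, eval_mul]; exact mul_ne_zero hg₁ne hg₂ne
      have hdd := hdvd k hkZ hgne
      rw [hfac, eval_mul, hf₁, eval_mul] at hdd
      exact (mul_dvd_mul_iff_left hg₁ne).mp hdd
    rw [hfac, hf₁]
    exact mul_dvd_mul_left g₁ h2

lemma impl_5_4 (h : SEPP D) : EPP D := by
  intro f g hprim hdeg hdvd
  exact sepp_aux h g.natDegree g f le_rfl hprim ∅ Set.finite_empty (fun k _ => hdvd k)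

lemma impl_4_1 (h : EPP D) : IsDRing D := by
  classical
  letI : NormalizationMonoid D := UniqueFactorizationMonoid.normalizationMonoid.toNormalizationMonoid
  letI : NormalizedGCDMonoid D := UniqueFactorizationMonoid.toNormalizedGCDMonoid D
  intro f g hg0 hZ
  set φ := algebraMap D (FractionRing D) with hφ
  have hinj : Function.Injective φ := IsFractionRing.injective D (FractionRing D)
  by_cases hdg : g.natDegree = 0
  · have hgC := eq_C_of_natDegree_eq_zero hdg
    have hc0 : g.coeff 0 ≠ 0 := fun hh => hg0 (by rw [hgC, hh, map_zero])
    have : IsUnit (g.map φ) := by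
      rw [hgC, map_C]
      exact isUnit_C.mpr (isUnit_iff_ne_zero.mpr (fun hh => hc0 (hinj (by rw [hh, map_zero]))))
    exact this.dvd
  · set g₀ := g.primPart with hg₀def
    have hprim : g₀.IsPrimitive := g.isPrimitive_primPart
    have hdeg₀ : 1 ≤ g₀.natDegree := by rw [hg₀def, natDegree_primPart]; omega
    set Zs := {k : D | ¬ g.eval k ∣ f.eval k} with hZs
    set m := ∏ k ∈ hZ.toFinset.filter (fun k => g₀.eval k ≠ 0), g₀.eval k with hm
    have hm0 : m ≠ 0 := Finset.prod_ne_zero_iff.mpr (fun k hk => (Finset.mem_filter.mp hk).2)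
    have hgeval : ∀ k : D, g.eval k = g.content * g₀.eval k := by
      intro k
      conv_lhs => rw [g.eq_C_content_mul_primPart]
      rw [eval_mul, eval_C]
    have hdvd : ∀ k : D, g₀.eval k ≠ 0 → g₀.eval k ∣ (C m * f).eval k := by
      intro k hk
      rw [eval_mul, eval_C]
      by_cases hkZ : k ∈ Zs
      · have h1 : g₀.eval k ∣ m :=
          Finset.dvd_prod_of_mem _ (Finset.mem_filter.mpr ⟨hZ.mem_toFinset.mpr hkZ, hk⟩)
        exact h1.mul_right _
      · have h1 : g.eval k ∣ f.eval k := not_not.mp hkZ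
        have h2 : g₀.eval k ∣ g.eval k := by rw [hgeval k]; exact dvd_mul_left _ _
        exact (h2.trans h1).mul_left _
    have hdvd₀ : g₀ ∣ C m * f := h (C m * f) g₀ hprim hdeg₀ hdvd
    -- pass to the fraction field
    have h1 : g₀.map φ ∣ (C m * f).map φ := by
      obtain ⟨w, hw⟩ := hdvd₀
      exact ⟨w.map φ, by rw [hw, Polynomial.map_mul]⟩
    rw [Polynomial.map_mul, map_C] at h1
    have hmu : IsUnit (C (φ m) : (FractionRing D)[X]) :=
      isUnit_C.mpr (isUnit_iff_ne_zero.mpr (fun hh => hm0 (hinj (by rw [hh, map_zero]))))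
    have h2 : g₀.map φ ∣ f.map φ := hmu.dvd_mul_left.mp h1
    have hcu : IsUnit (C (φ g.content) : (FractionRing D)[X]) := by
      refine isUnit_C.mpr (isUnit_iff_ne_zero.mpr (fun hh => ?_))
      exact (content_eq_zero_iff.not.mpr hg0) (hinj (by rw [hh, map_zero]))
    have h3 : g.map φ = C (φ g.content) * g₀.map φ := by
      conv_lhs => rw [g.eq_C_content_mul_primPart]
      rw [Polynomial.map_mul, map_C]
    rw [h3]
    exact hcu.mul_left_dvd.mpr h2

end Main

theorem DRing_IPP_DPP_EPP_SEPP_tfae (D : Type*) [CommRing D] [IsDomain D]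
    [UniqueFactorizationMonoid D] :
    [IsDRing D, IPP D, DPP D, EPP D, SEPP D].TFAE := by
  tfae_have 1 → 3 := impl_1_3
  tfae_have 3 → 2 := impl_3_2
  tfae_have 2 → 5 := impl_2_5
  tfae_have 5 → 4 := impl_5_4
  tfae_have 4 → 1 := impl_4_1
  tfae_finish
end

section
/- (Kaplansky) Let D be an infinite integral domain with only finitely many units. Then D has infinitely many maximal ideals. -/
open Polynomial

theorem infinite_maximal_ideals_of_finite_units (D : Type*) [CommRing D] [IsDomain D]
    [Infinite D] (hu : Finite Dˣ) :
    {I : Ideal D | I.IsMaximal}.Infinite := by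
  classical
  haveI := hu
  by_contra hcon
  rw [Set.not_infinite] at hcon
  -- every maximal ideal is nonzero
  have hbot : ∀ I : Ideal D, I.IsMaximal → I ≠ ⊥ := by
    intro I hI hI0
    subst hI0
    -- then D is a field, so Dˣ is infinite
    haveI := hu
    have hfield : IsField D := by
      by_contra hnf
      exact Ring.ne_bot_of_isMaximal_of_not_isField hI hnf rfl
    have hux : ∀ x : D, x ≠ 0 → IsUnit x := fun x hx => by
      obtain ⟨y, hy⟩ := hfield.mul_inv_cancel hx
      exact isUnit_iff_exists_inv.mpr ⟨y, hy⟩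
    have : Finite D := by
      haveI := Fintype.ofFinite Dˣ
      have : Function.Injective (fun x : D => if hx : x = 0 then (none : Option Dˣ)
          else some (IsUnit.unit (hux x hx))) := by
        intro a b hab
        by_cases ha : a = 0 <;> by_cases hb : b = 0 <;> simp [ha, hb] at hab ⊢
        · have := congrArg Units.val hab
          simpa using this
      exact Finite.of_injective _ this
    exact this.not_infinite inferInstance
  -- the Jacobson radical of ⊥ is finite
  have hjacfin : Finite (Ideal.jacobson (⊥ : Ideal D) : Set D) := by
    have hinj : Function.Injective (fun x : (Ideal.jacobson (⊥ : Ideal D) : Set D) =>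
        IsUnit.unit (by simpa using (Ideal.mem_jacobson_bot.mp x.2 1))) := by
      intro a b hab
      have := congrArg Units.val hab
      simp only [IsUnit.unit_spec] at this
      exact Subtype.ext (by linear_combination this)
    exact Finite.of_injective _ hinj
  -- but it is nonzero
  have hne : Ideal.jacobson (⊥ : Ideal D) ≠ ⊥ := by
    have hchoice : ∀ I : Ideal D, I.IsMaximal → ∃ a : D, a ∈ I ∧ a ≠ 0 := by
      intro I hI
      obtain ⟨a, ha, hne⟩ := Submodule.exists_mem_ne_zero_of_ne_bot (hbot I hI)
      exact ⟨a, ha, hne⟩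
    choose f hf1 hf2 using hchoice
    set S := hcon.toFinset with hS
    set a : D := ∏ I ∈ S.attach, f I.1 (hcon.mem_toFinset.mp I.2) with ha
    have ha0 : a ≠ 0 := by
      rw [ha, Finset.prod_ne_zero_iff]
      intro I _
      exact hf2 _ _
    have hamem : a ∈ Ideal.jacobson (⊥ : Ideal D) := by
      rw [Ideal.jacobson]
      rw [Ideal.mem_sInf]
      intro J hJ
      have hJmax : J.IsMaximal := hJ.2
      have hJS : J ∈ S := hcon.mem_toFinset.mpr hJmax
      rw [ha, ← Finset.prod_erase_mul _ _ (Finset.mem_attach S ⟨J, hJS⟩)]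
      exact Ideal.mul_mem_left _ _ (hf1 J hJmax)
    intro h
    rw [h] at hamem
    exact ha0 hamem
  -- so it contains a nonzero element, making it infinite
  obtain ⟨b, hb, hb0⟩ := Submodule.exists_mem_ne_zero_of_ne_bot hne
  have : Infinite (Ideal.jacobson (⊥ : Ideal D) : Set D) := by
    have hinj : Function.Injective (fun d : D =>
        (⟨b * d, Ideal.mul_mem_right d _ hb⟩ : (Ideal.jacobson (⊥ : Ideal D) : Set D))) := by
      intro x y hxy
      exact mul_left_cancel₀ hb0 (congrArg Subtype.val hxy)
    exact Infinite.of_injective _ hinj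
  exact absurd hjacfin this.not_finite
end

section
/- Let d be an integer that is not a perfect square. Then the ring ℤ[√d] = {x + y√d : x, y ∈ ℤ} satisfies the degree polynomial property (DPP); consequently ℤ[√d] is a D-ring. -/
open Polynomial

theorem zsqrtd_isDomain_of_nonsquare {d : ℤ} (hd : ¬ IsSquare d) :
    IsDomain (ℤ√d) := by
  have hd' : ∀ n : ℤ, d ≠ n * n := fun n h => hd ⟨n, h⟩
  haveI : NoZeroDivisors (ℤ√d) := ⟨fun {a b} hab => by
    have h := congrArg Zsqrtd.norm hab
    rw [Zsqrtd.norm_mul, Zsqrtd.norm_zero] at h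
    rcases mul_eq_zero.mp h with h' | h'
    · exact Or.inl ((Zsqrtd.norm_eq_zero hd' a).mp h')
    · exact Or.inr ((Zsqrtd.norm_eq_zero hd' b).mp h')⟩
  exact NoZeroDivisors.to_isDomain _


namespace ZsqrtdDPPAux

variable {d : ℤ}

/-- The polynomial of real parts of the coefficients. -/
noncomputable def reP (f : Polynomial (ℤ√d)) : Polynomial ℤ := ⟨AddMonoidAlgebra.ofCoeff (f.toFinsupp.coeff.mapRange Zsqrtd.re rfl)⟩

/-- The polynomial of imaginary parts of the coefficients. -/
noncomputable def imP (f : Polynomial (ℤ√d)) : Polynomial ℤ := ⟨AddMonoidAlgebra.ofCoeff (f.toFinsupp.coeff.mapRange Zsqrtd.im rfl)⟩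

@[simp] lemma coeff_reP (f : Polynomial (ℤ√d)) (n : ℕ) :
    (reP f).coeff n = (f.coeff n).re := by
  rcases f with ⟨f⟩
  simp [reP, coeff_ofFinsupp, Polynomial.coeff]
  rfl

@[simp] lemma coeff_imP (f : Polynomial (ℤ√d)) (n : ℕ) :
    (imP f).coeff n = (f.coeff n).im := by
  rcases f with ⟨f⟩
  simp [imP, coeff_ofFinsupp, Polynomial.coeff]
  rfl

lemma re_eval (f : Polynomial (ℤ√d)) (n : ℤ) :
    (f.eval (n : ℤ√d)).re = (reP f).eval n := by
  induction f using Polynomial.induction_on' with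
  | add p q hp hq =>
    have hre : reP (p + q) = reP p + reP q := by ext k; simp
    rw [eval_add, Zsqrtd.re_add, hp, hq, hre, eval_add]
  | monomial k a =>
    have hre : reP (monomial k a : Polynomial (ℤ√d)) = monomial k a.re := by
      ext j; simp [coeff_monomial, apply_ite Zsqrtd.re]
    have hc : ((n : ℤ√d)) ^ k = ((n ^ k : ℤ) : ℤ√d) := by push_cast; ring
    rw [eval_monomial, hre, eval_monomial, hc, Zsqrtd.re_mul, Zsqrtd.re_intCast,
      Zsqrtd.im_intCast]
    ring

lemma im_eval (f : Polynomial (ℤ√d)) (n : ℤ) :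
    (f.eval (n : ℤ√d)).im = (imP f).eval n := by
  induction f using Polynomial.induction_on' with
  | add p q hp hq =>
    have him : imP (p + q) = imP p + imP q := by ext k; simp
    rw [eval_add, Zsqrtd.im_add, hp, hq, him, eval_add]
  | monomial k a =>
    have him : imP (monomial k a : Polynomial (ℤ√d)) = monomial k a.im := by
      ext j; simp [coeff_monomial, apply_ite Zsqrtd.im]
    have hc : ((n : ℤ√d)) ^ k = ((n ^ k : ℤ) : ℤ√d) := by push_cast; ring
    rw [eval_monomial, him, eval_monomial, hc, Zsqrtd.im_mul, Zsqrtd.re_intCast,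
      Zsqrtd.im_intCast]
    ring

/-- The "norm" of a polynomial over `ℤ√d`, an integer polynomial. -/
noncomputable def normPoly (f : Polynomial (ℤ√d)) : Polynomial ℤ :=
  reP f * reP f - C d * (imP f * imP f)

lemma eval_normPoly (f : Polynomial (ℤ√d)) (n : ℤ) :
    (normPoly f).eval n = Zsqrtd.norm (f.eval (n : ℤ√d)) := by
  rw [Zsqrtd.norm_def, re_eval, im_eval, normPoly]
  simp only [eval_sub, eval_mul, eval_C]
  ring

lemma sq_coeff (A : Polynomial ℤ) (m : ℕ) (h : A.natDegree ≤ m) :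
    (A * A).coeff (m + m) = A.coeff m * A.coeff m := by
  rcases eq_or_lt_of_le h with he | hl
  · rw [← he]
    rw [coeff_mul_degree_add_degree]
    rfl
  · have h1 : (A * A).natDegree < m + m :=
      lt_of_le_of_lt (natDegree_mul_le) (by omega)
    rw [coeff_eq_zero_of_natDegree_lt h1, coeff_eq_zero_of_natDegree_lt hl, mul_zero]

lemma nonsquare_aux (hd : ¬ IsSquare d) {a b : ℤ} (h : a * a - d * (b * b) = 0) :
    a = 0 ∧ b = 0 := by
  have h' : a * a = d * (b * b) := by linarith
  rcases eq_or_ne b 0 with hb | hb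
  · subst hb
    refine ⟨?_, rfl⟩
    have : a * a = 0 := by linarith
    exact mul_self_eq_zero.mp this
  · exfalso
    have hdvd : b ^ 2 ∣ a ^ 2 := ⟨d, by ring_nf; nlinarith [h']⟩
    obtain ⟨c, rfl⟩ := (Int.pow_dvd_pow_iff two_ne_zero).mp hdvd
    apply hd
    refine ⟨c, ?_⟩
    have hbb : b * b ≠ 0 := mul_ne_zero hb hb
    have : (b * b) * (c * c) = (b * b) * d := by ring_nf; nlinarith [h']
    have := mul_left_cancel₀ hbb this
    omega

lemma normPoly_ne_zero (hd : ¬ IsSquare d) {f : Polynomial (ℤ√d)} (hf : f ≠ 0) :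
    normPoly f ≠ 0 ∧ (normPoly f).natDegree = f.natDegree + f.natDegree := by
  set m := f.natDegree with hm
  have hA : (reP f).natDegree ≤ m := natDegree_le_iff_coeff_eq_zero.mpr fun N hN => by
    rw [coeff_reP, coeff_eq_zero_of_natDegree_lt hN, Zsqrtd.re_zero]
  have hB : (imP f).natDegree ≤ m := natDegree_le_iff_coeff_eq_zero.mpr fun N hN => by
    rw [coeff_imP, coeff_eq_zero_of_natDegree_lt hN, Zsqrtd.im_zero]
  have hcoeff : (normPoly f).coeff (m + m)
      = (reP f).coeff m * (reP f).coeff m - d * ((imP f).coeff m * (imP f).coeff m) := by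
    rw [normPoly, coeff_sub, coeff_C_mul, sq_coeff _ m hA, sq_coeff _ m hB]
  have hfm : f.coeff m ≠ 0 := by
    rw [hm]
    exact mt leadingCoeff_eq_zero.mp hf
  have hne : (normPoly f).coeff (m + m) ≠ 0 := by
    rw [hcoeff]
    intro h0
    obtain ⟨ha, hb⟩ := nonsquare_aux hd h0
    rw [coeff_reP] at ha
    rw [coeff_imP] at hb
    exact hfm (Zsqrtd.ext ha hb)
  have hnz : normPoly f ≠ 0 := fun h0 => hne (by rw [h0, coeff_zero])
  refine ⟨hnz, le_antisymm ?_ (le_natDegree_of_ne_zero hne)⟩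
  refine (natDegree_sub_le _ _).trans (max_le ?_ ?_)
  · exact (natDegree_mul_le).trans (add_le_add hA hA)
  · refine (natDegree_mul_le).trans ?_
    simpa using (natDegree_mul_le).trans (add_le_add hB hB)

lemma int_poly_zero (P Q : Polynomial ℤ) (hQ : Q ≠ 0) (hdeg : P.natDegree < Q.natDegree)
    (H : ∀ n : ℤ, Q.eval n ≠ 0 → Q.eval n ∣ P.eval n) : P = 0 := by
  by_contra hP
  set ι := Int.castRingHom ℝ with hι
  have hinj : Function.Injective (ι : ℤ →+* ℝ) := Int.cast_injective
  set Pr := P.map ι with hPr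
  set Qr := Q.map ι with hQr
  have hPr0 : Pr ≠ 0 := fun h => hP ((Polynomial.map_eq_zero_iff hinj).mp h)
  have hQr0 : Qr ≠ 0 := fun h => hQ ((Polynomial.map_eq_zero_iff hinj).mp h)
  have hPrd : Pr.natDegree = P.natDegree := natDegree_map_eq_of_injective hinj P
  have hQrd : Qr.natDegree = Q.natDegree := natDegree_map_eq_of_injective hinj Q
  have hdlt : (Pr * Pr).degree < (Qr * Qr).degree := by
    apply degree_lt_degree
    rw [natDegree_mul hPr0 hPr0, natDegree_mul hQr0 hQr0, hPrd, hQrd]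
    omega
  set R := Qr * Qr - Pr * Pr with hR
  have hRdeg : R.degree = (Qr * Qr).degree := degree_sub_eq_left_of_degree_lt hdlt
  have hRlead : R.leadingCoeff = (Qr * Qr).leadingCoeff := by
    rw [hR, sub_eq_add_neg, add_comm]
    rw [leadingCoeff_add_of_degree_lt (by simpa using hdlt)]
  have hlead_nonneg : 0 ≤ R.leadingCoeff := by
    rw [hRlead, leadingCoeff_mul]; exact mul_self_nonneg _
  have hRnat : 0 < R.natDegree := by
    rw [natDegree_eq_of_degree_eq hRdeg, natDegree_mul hQr0 hQr0, hQrd]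
    omega
  have hRpos : 0 < R.degree := natDegree_pos_iff_degree_pos.mp hRnat
  have htend := Polynomial.tendsto_atTop_of_leadingCoeff_nonneg R hRpos hlead_nonneg
  obtain ⟨x₀, hx₀⟩ := Filter.eventually_atTop.mp (htend.eventually_gt_atTop 0)
  have key : ∀ n : ℤ, ⌈x₀⌉ ≤ n → P.eval n = 0 := by
    intro n hn
    have hx : x₀ ≤ (n : ℝ) := le_trans (Int.le_ceil x₀) (by exact_mod_cast hn)
    have h1 : 0 < R.eval (n : ℝ) := hx₀ _ hx
    have hPe : Pr.eval ((n : ℤ) : ℝ) = ((P.eval n : ℤ) : ℝ) := by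
      rw [hPr, Polynomial.eval_intCast_map]; rfl
    have hQe : Qr.eval ((n : ℤ) : ℝ) = ((Q.eval n : ℤ) : ℝ) := by
      rw [hQr, Polynomial.eval_intCast_map]; rfl
    rw [hR, eval_sub, eval_mul, eval_mul, hPe, hQe, sub_pos] at h1
    have h2 : P.eval n * P.eval n < Q.eval n * Q.eval n := by exact_mod_cast h1
    have hQn : Q.eval n ≠ 0 := by
      intro h0
      rw [h0] at h2
      nlinarith [mul_self_nonneg (P.eval n)]
    by_contra hPn
    have habs : |Q.eval n| ≤ |P.eval n| :=
      Int.le_of_dvd (abs_pos.mpr hPn) ((abs_dvd _ _).mpr ((dvd_abs _ _).mpr (H n hQn)))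
    have := mul_self_le_mul_self (abs_nonneg _) habs
    rw [abs_mul_abs_self, abs_mul_abs_self] at this
    omega
  apply hP
  apply P.eq_zero_of_infinite_isRoot
  exact (Set.Ici_infinite (⌈x₀⌉ : ℤ)).mono fun n hn => key n hn

theorem zsqrtd_dpp (hd : ¬ IsSquare d) (f g : Polynomial (ℤ√d))
    (H : ∀ k : ℤ√d, g.eval k ≠ 0 → g.eval k ∣ f.eval k) :
    f = 0 ∨ g.natDegree ≤ f.natDegree := by
  rcases eq_or_ne f 0 with rfl | hf
  · exact Or.inl rfl
  right
  by_contra hlt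
  push_neg at hlt
  have hg : g ≠ 0 := by rintro rfl; simp at hlt
  obtain ⟨hP, hPdeg⟩ := normPoly_ne_zero hd hf
  obtain ⟨hQ, hQdeg⟩ := normPoly_ne_zero hd hg
  refine hP (int_poly_zero _ _ hQ (by omega) ?_)
  intro n hn
  rw [eval_normPoly] at hn ⊢
  rw [eval_normPoly]
  have hgn : g.eval ((n : ℤ) : ℤ√d) ≠ 0 := fun h0 => hn (by rw [h0, Zsqrtd.norm_zero])
  obtain ⟨c, hc⟩ := H _ hgn
  exact ⟨Zsqrtd.norm c, by rw [hc, Zsqrtd.norm_mul]⟩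

end ZsqrtdDPPAux

theorem dpp_isDRing (D : Type*) [CommRing D] [IsDomain D] (hdpp : DPP D) : IsDRing D := by
  classical
  intro f g hg hfin
  set K := FractionRing D
  set ι := algebraMap D K with hι
  have hinj : Function.Injective ι := IsFractionRing.injective D K
  set f' := f.map ι with hf'
  set g' := g.map ι with hg'def
  have hg' : g' ≠ 0 := fun h => hg ((Polynomial.map_eq_zero_iff hinj).mp h)
  set q := f' / g' with hq
  set r := f' % g' with hr
  have hmod : g' * q + r = f' := EuclideanDomain.div_add_mod f' g'
  have hrlt : r.degree < g'.degree := EuclideanDomain.mod_lt _ hg'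
  rcases eq_or_ne r 0 with hr0 | hr0
  · exact ⟨q, by rw [← hmod, hr0, add_zero]⟩
  exfalso
  obtain ⟨cq, hcq⟩ := IsLocalization.integerNormalization_map_to_map (nonZeroDivisors D) q
  obtain ⟨cr, hcr⟩ := IsLocalization.integerNormalization_map_to_map (nonZeroDivisors D) r
  set Qp := C (cr : D) * IsLocalization.integerNormalization (nonZeroDivisors D) q with hQp
  set Rp := C (cq : D) * IsLocalization.integerNormalization (nonZeroDivisors D) r with hRp
  have hcq0 : (cq : D) ≠ 0 := nonZeroDivisors.coe_ne_zero cq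
  have hcr0 : (cr : D) ≠ 0 := nonZeroDivisors.coe_ne_zero cr
  set c := (cq : D) * (cr : D) with hcdef
  have hc0 : c ≠ 0 := mul_ne_zero hcq0 hcr0
  have hsmul : ∀ (b : D) (p : Polynomial K), (b • p) = C (ι b) * p := fun b p => by
    rw [← smul_eq_C_mul, algebraMap_smul]
  have hQmap : Qp.map ι = C (ι (cr : D) * ι (cq : D)) * q := by
    rw [hQp, Polynomial.map_mul, map_C, hcq, hsmul, C_mul, mul_assoc]
  have hRmap : Rp.map ι = C (ι (cq : D) * ι (cr : D)) * r := by
    rw [hRp, Polynomial.map_mul, map_C, hcr, hsmul, C_mul, mul_assoc]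
  have hcc0 : ι (cq : D) * ι (cr : D) ≠ 0 :=
    mul_ne_zero (fun h => hcq0 (hinj (h.trans (map_zero ι).symm)))
      (fun h => hcr0 (hinj (h.trans (map_zero ι).symm)))
  have hRp0 : Rp ≠ 0 := by
    intro h0
    apply hr0
    have h1 := congrArg (Polynomial.map ι) h0
    rw [hRmap, Polynomial.map_zero] at h1
    rcases mul_eq_zero.mp h1 with hC | h2
    · exact absurd (C_eq_zero.mp hC) hcc0
    · exact h2
  have hkey : C c * f = Qp * g + Rp := by
    apply Polynomial.map_injective ι hinj
    rw [Polynomial.map_add, Polynomial.map_mul, Polynomial.map_mul, map_C, hQmap, hRmap,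
      hcdef, map_mul, ← hf', ← hg'def, ← hmod]
    ring_nf
    rw [mul_comm (ι (cr : D)) (ι (cq : D))]
    ring
  set S := hfin.toFinset.filter (fun k => g.eval k ≠ 0) with hS
  set M := ∏ k ∈ S, g.eval k with hM
  have hM0 : M ≠ 0 := Finset.prod_ne_zero_iff.mpr fun k hk => (Finset.mem_filter.mp hk).2
  set h := C M * Rp with hh
  have hdvd : ∀ k : D, g.eval k ≠ 0 → g.eval k ∣ h.eval k := by
    intro k hk
    rw [hh, eval_mul, eval_C]
    by_cases hgf : g.eval k ∣ f.eval k
    · refine Dvd.dvd.mul_left ?_ M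
      have h2 : Rp.eval k = (C c * f).eval k - Qp.eval k * g.eval k := by
        rw [hkey]; simp only [eval_add, eval_mul]; ring
      rw [h2, eval_mul, eval_C]
      exact dvd_sub (hgf.mul_left c) (dvd_mul_left _ _)
    · have hkS : k ∈ S := by
        rw [hS, Finset.mem_filter, Set.Finite.mem_toFinset]
        exact ⟨hgf, hk⟩
      exact (Finset.dvd_prod_of_mem _ hkS).mul_right _
  have hh0 : h ≠ 0 := mul_ne_zero (C_ne_zero.mpr hM0) hRp0
  rcases hdpp h g hdvd with h0 | hge
  · exact hh0 h0
  · have hdeg_Rp : Rp.degree = r.degree := by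
      rw [← degree_map_eq_of_injective hinj Rp, hRmap, degree_C_mul hcc0]
    have hdeg_h : h.degree = r.degree := by
      rw [hh, degree_C_mul hM0, hdeg_Rp]
    have hglt : r.degree < g.degree := by
      rwa [hg'def, degree_map_eq_of_injective hinj g] at hrlt
    have hle : g.degree ≤ h.degree := by
      calc g.degree ≤ (g.natDegree : WithBot ℕ) := degree_le_natDegree
        _ ≤ (h.natDegree : WithBot ℕ) := by exact_mod_cast hge
        _ = h.degree := (degree_eq_natDegree hh0).symm
    rw [hdeg_h] at hle
    exact absurd hle (not_le.mpr hglt)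

theorem zsqrtd_DPP_and_DRing (d : ℤ) (hd : ¬ IsSquare d) :
    haveI : IsDomain (ℤ√d) := zsqrtd_isDomain_of_nonsquare hd
    DPP (ℤ√d) ∧ IsDRing (ℤ√d) := by
  haveI : IsDomain (ℤ√d) := zsqrtd_isDomain_of_nonsquare hd
  have hdpp : DPP (ℤ√d) := fun f g H => ZsqrtdDPPAux.zsqrtd_dpp hd f g H
  exact ⟨hdpp, dpp_isDRing _ hdpp⟩
end
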